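/- arXiv:2303.17303 — 3 statements merged into one kernel-verified Lean document; each statement's English description precedes it below -/
import Mathlib

section
/- Let V be a separable real Banach space. Then V* has the weak* Lebesgue density property: every f ∈ L^∞_*((0,1);V*) has a weak* representative g satisfying the weak* Lebesgue density theorem, i.e. for almost every t ∈ (0,1) the Gelfand averages (1/h)∫_t^{t+h} g(s) ds converge to g(t) in the weak* topology of V* as h → 0. -/
open MeasureTheory Filter Set Topology NNReal ENNReal

noncomputable section

/-- `Ω` is a bounded domain in `ℝⁿ`: a nonempty open connected bounded set. -/
def IsBoundedDomain {n : ℕ} (Ω : Set (EuclideanSpace ℝ (Fin n))) : Prop :=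
  IsOpen Ω ∧ IsConnected Ω ∧ Bornology.IsBounded Ω
/-- `t` is a weak* Lebesgue point of `g`: the Gelfand averages `(1/h)∫_t^{t+h} g`
converge to `g t` in the weak* topology as `h → 0`, i.e. the pairings with every
`v ∈ V` converge. -/
def WeakStarLebesguePoint {V : Type*} [NormedAddCommGroup V] [NormedSpace ℝ V]
    (g : ℝ → StrongDual ℝ V) (t : ℝ) : Prop :=
  ∀ v : V, Filter.Tendsto (fun h : ℝ => (∫ s in t..(t + h), g s v) / h)
    (nhdsWithin 0 {0}ᶜ) (nhds (g t v))

/-- `V*` has the weak* Lebesgue density property: every `f ∈ L^∞_*((0,1); V*)` has a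
weak* representative `g` satisfying the weak* Lebesgue density theorem. -/
def HasWeakStarLebesgueDensityProperty (V : Type*) [NormedAddCommGroup V]
    [NormedSpace ℝ V] : Prop :=
  ∀ f : ℝ → StrongDual ℝ V,
    (∀ v : V, AEMeasurable (fun t => f t v) (volume.restrict (Set.Ioo (0:ℝ) 1))) →
    (∃ M : ℝ, ∀ᵐ t ∂(volume.restrict (Set.Ioo (0:ℝ) 1)), ‖f t‖ ≤ M) →
    ∃ g : ℝ → StrongDual ℝ V,
      (∀ v : V, ∀ᵐ t ∂(volume.restrict (Set.Ioo (0:ℝ) 1)), f t v = g t v) ∧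
      ∀ᵐ t ∂(volume.restrict (Set.Ioo (0:ℝ) 1)), WeakStarLebesguePoint g t

lemma abs_tendsto_pos' :
    Tendsto (fun h : ℝ => |h|) (nhdsWithin 0 {0}ᶜ) (nhdsWithin 0 (Set.Ioi 0)) := by
  apply tendsto_nhdsWithin_of_tendsto_nhds_of_eventually_within
  · simpa using (continuous_abs.tendsto (0:ℝ)).mono_left nhdsWithin_le_nhds
  · filter_upwards [self_mem_nhdsWithin] with h hh
    simpa using abs_pos.2 hh

/-- One-dimensional Lebesgue differentiation theorem for two-sided interval averages. -/
lemma ae_tendsto_intervalAverage' (φ : ℝ → ℝ) (hφ : Integrable φ) :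
    ∀ᵐ t : ℝ, Tendsto (fun h : ℝ => (∫ s in t..(t + h), φ s) / h)
      (nhdsWithin 0 {0}ᶜ) (nhds (φ t)) := by
  filter_upwards [IsUnifLocDoublingMeasure.ae_tendsto_average_norm_sub (μ := volume)
    hφ.locallyIntegrable 1] with t ht
  have key : Tendsto (fun h : ℝ => ⨍ y in Metric.closedBall t |h|, ‖φ y - φ t‖)
      (nhdsWithin 0 {0}ᶜ) (nhds 0) := by
    apply ht (fun _ => t) (fun h => |h|) abs_tendsto_pos'
    filter_upwards with h
    simp [Metric.mem_closedBall, abs_nonneg]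
  have bound : ∀ h : ℝ, h ≠ 0 →
      ‖(∫ s in t..(t + h), φ s) / h - φ t‖
        ≤ 2 * ⨍ y in Metric.closedBall t |h|, ‖φ y - φ t‖ := by
    intro h hh
    have habs : (0:ℝ) < |h| := abs_pos.2 hh
    have hint : IntervalIntegrable φ volume t (t + h) := hφ.intervalIntegrable
    have hconst : IntervalIntegrable (fun _ : ℝ => φ t) volume t (t + h) :=
      intervalIntegrable_const
    have heq : (∫ s in t..(t + h), φ s) / h - φ t
        = (∫ s in t..(t + h), (φ s - φ t)) / h := by
      rw [intervalIntegral.integral_sub hint hconst, intervalIntegral.integral_const, add_sub_cancel_left, smul_eq_mul]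
      field_simp
    have hsub : Set.uIoc t (t + h) ⊆ Metric.closedBall t |h| := by
      intro y hy
      rw [Set.mem_uIoc] at hy
      rw [Metric.mem_closedBall, Real.dist_eq, abs_le]
      have h1 := le_abs_self h
      have h2 := neg_abs_le h
      rcases hy with ⟨ha, hb⟩ | ⟨ha, hb⟩ <;> constructor <;> linarith
    have hIntOn : IntegrableOn (fun y => ‖φ y - φ t‖) (Metric.closedBall t |h|) volume :=
      (hφ.integrableOn.sub (integrableOn_const measure_closedBall_lt_top.ne)).norm
    have step1 : ‖∫ s in t..(t + h), (φ s - φ t)‖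
        ≤ ∫ y in Metric.closedBall t |h|, ‖φ y - φ t‖ := by
      refine (intervalIntegral.norm_integral_le_integral_norm_uIoc).trans ?_
      exact setIntegral_mono_set hIntOn
        (Eventually.of_forall fun y => norm_nonneg _) (HasSubset.Subset.eventuallyLE hsub)
    have hmeas : (volume (Metric.closedBall t |h|)).toReal = 2 * |h| := by
      rw [Real.volume_closedBall, ENNReal.toReal_ofReal (by positivity)]
    calc ‖(∫ s in t..(t + h), φ s) / h - φ t‖
        = ‖∫ s in t..(t + h), (φ s - φ t)‖ / |h| := by
          rw [heq, norm_div, Real.norm_eq_abs h]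
      _ ≤ (∫ y in Metric.closedBall t |h|, ‖φ y - φ t‖) / |h| := by gcongr
      _ = 2 * ⨍ y in Metric.closedBall t |h|, ‖φ y - φ t‖ := by
          rw [setAverage_eq, measureReal_def, hmeas, smul_eq_mul]
          field_simp
  have h0 : Tendsto (fun h : ℝ => (∫ s in t..(t + h), φ s) / h - φ t)
      (nhdsWithin 0 {0}ᶜ) (nhds 0) := by
    apply squeeze_zero_norm' _ (by simpa using key.const_mul 2)
    filter_upwards [self_mem_nhdsWithin] with h hh
    exact bound h hh
  have := h0.add_const (φ t)
  simpa using this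

/-- If `V` is a separable real Banach space, then `V*` has the weak* Lebesgue density
property: every `f ∈ L^∞_*((0,1);V*)` has a weak* representative satisfying the weak*
Lebesgue density theorem. -/
theorem hasWeakStarLDP_of_separable
    {V : Type*} [NormedAddCommGroup V] [NormedSpace ℝ V] [CompleteSpace V]
    [TopologicalSpace.SeparableSpace V] :
    HasWeakStarLebesgueDensityProperty V := by
  intro f hmeas hbdd
  haveI : Nonempty V := ⟨0⟩
  obtain ⟨M₀, hM₀⟩ := hbdd
  set M : ℝ := |M₀| with hMdef
  have hM0 : (0:ℝ) ≤ M := abs_nonneg _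
  have hM : ∀ᵐ t ∂(volume.restrict (Set.Ioo (0:ℝ) 1)), ‖f t‖ ≤ M :=
    hM₀.mono fun t ht => ht.trans (le_abs_self M₀)
  -- a measurable full-measure subset `D ⊆ Ioo 0 1` on which `‖f t‖ ≤ M` everywhere
  have hbad : (volume.restrict (Set.Ioo (0:ℝ) 1)) {t | ¬ ‖f t‖ ≤ M} = 0 := hM
  obtain ⟨B, hBsub, hBmeas, hB0⟩ := exists_measurable_superset_of_null hbad
  set D : Set ℝ := Set.Ioo (0:ℝ) 1 \ B with hDdef
  have hDmeas : MeasurableSet D := measurableSet_Ioo.diff hBmeas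
  have hDsub : D ⊆ Set.Ioo (0:ℝ) 1 := Set.diff_subset
  have hDbd : ∀ t ∈ D, ‖f t‖ ≤ M := by
    intro t ht
    by_contra hc
    exact ht.2 (hBsub hc)
  have hD_ae : ∀ᵐ t ∂(volume.restrict (Set.Ioo (0:ℝ) 1)), t ∈ D := by
    rw [ae_iff]
    have : {t | ¬ t ∈ D} = Dᶜ := rfl
    rw [this, Measure.restrict_apply hDmeas.compl]
    refine measure_mono_null ?_ (by rwa [Measure.restrict_apply hBmeas] at hB0)
    intro t ⟨ht1, ht2⟩
    rcases not_and_or.1 ht1 with h | h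
    · exact absurd ht2 h
    · exact ⟨not_not.1 h, ht2⟩
  -- the scalar functions
  set φ : V → ℝ → ℝ := fun v => D.indicator (fun s => f s v) with hφdef
  have hφmeas : ∀ v, AEMeasurable (φ v) volume := by
    intro v
    exact (aemeasurable_indicator_iff hDmeas).2
      ((hmeas v).mono_measure (Measure.restrict_mono hDsub le_rfl))
  have hφbd : ∀ v t, ‖φ v t‖ ≤ M * ‖v‖ := by
    intro v t
    by_cases ht : t ∈ D
    · rw [hφdef]
      simp only [Set.indicator_of_mem ht]
      exact ((f t).le_opNorm v).trans (by gcongr; exact hDbd t ht)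
    · rw [hφdef]
      simp only [Set.indicator_of_notMem ht, norm_zero]
      positivity
  have hφint : ∀ v, Integrable (φ v) volume := by
    intro v
    rw [hφdef, integrable_indicator_iff hDmeas]
    refine ⟨(((hmeas v).mono_measure
        (Measure.restrict_mono hDsub le_rfl))).aestronglyMeasurable,
      HasFiniteIntegral.restrict_of_bounded (C := M * ‖v‖) ?_ ?_⟩
    · exact (measure_mono hDsub).trans_lt (by simp [Real.volume_Ioo])
    · filter_upwards [ae_restrict_mem hDmeas] with t ht
      exact ((f t).le_opNorm v).trans (by gcongr; exact hDbd t ht)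
  -- candidate representative
  refine ⟨D.indicator f, ?_, ?_⟩
  · intro v
    filter_upwards [hD_ae] with t ht
    rw [Set.indicator_of_mem ht]
  · -- Lebesgue points
    set e : ℕ → V := TopologicalSpace.denseSeq V with hedef
    have hLebAll : ∀ᵐ t ∂volume, ∀ n : ℕ,
        Tendsto (fun h : ℝ => (∫ s in t..(t + h), φ (e n) s) / h)
          (nhdsWithin 0 {0}ᶜ) (nhds (φ (e n) t)) :=
      ae_all_iff.2 fun n => ae_tendsto_intervalAverage' (φ (e n)) (hφint (e n))
    filter_upwards [ae_restrict_of_ae hLebAll, hD_ae] with t hLeb htD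
    intro v
    have hfun : (fun s : ℝ => (D.indicator f s) v) = φ v := by
      funext s
      by_cases hs : s ∈ D
      · simp [hφdef, Set.indicator_of_mem hs]
      · simp [hφdef, Set.indicator_of_notMem hs]
    have hgt : (D.indicator f t) v = φ v t := by
      simp [hφdef, Set.indicator_of_mem htD]
    simp only [hfun, hgt]
    -- now prove the tendsto for `φ v`
    rw [Metric.tendsto_nhds]
    intro ε hε
    have hM1 : (0:ℝ) < M + 1 := by linarith
    have hδ : (0:ℝ) < ε / (3 * (M + 1)) := by positivity
    obtain ⟨n, hn⟩ := (TopologicalSpace.denseRange_denseSeq V).exists_dist_lt v hδ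
    have hvn : ‖v - e n‖ < ε / (3 * (M + 1)) := by
      rw [hedef, ← dist_eq_norm]
      exact hn
    have hclose : ∀ s, ‖φ v s - φ (e n) s‖ ≤ M * ‖v - e n‖ := by
      intro s
      by_cases hs : s ∈ D
      · simp only [hφdef, Set.indicator_of_mem hs]
        rw [← map_sub]
        exact ((f s).le_opNorm _).trans (by gcongr; exact hDbd s hs)
      · simp only [hφdef, Set.indicator_of_notMem hs, sub_zero, norm_zero]
        positivity
    have hthird : M * ‖v - e n‖ ≤ ε / 3 := by
      have : M * ‖v - e n‖ ≤ (M + 1) * (ε / (3 * (M + 1))) := by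
        apply mul_le_mul (by linarith) hvn.le (norm_nonneg _) (by linarith)
      calc M * ‖v - e n‖ ≤ (M + 1) * (ε / (3 * (M + 1))) := this
        _ = ε / 3 := by field_simp
    filter_upwards [Metric.tendsto_nhds.1 (hLeb n) (ε / 3) (by positivity),
      self_mem_nhdsWithin] with h hh hne
    have hne' : h ≠ 0 := hne
    have habs : (0:ℝ) < |h| := abs_pos.2 hne'
    -- distance between the two averages
    have havg : dist ((∫ s in t..(t + h), φ v s) / h)
        ((∫ s in t..(t + h), φ (e n) s) / h) ≤ M * ‖v - e n‖ := by
      rw [dist_eq_norm, div_sub_div_same, ← intervalIntegral.integral_sub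
        (hφint v).intervalIntegrable (hφint (e n)).intervalIntegrable,
        norm_div, Real.norm_eq_abs h]
      rw [div_le_iff₀ habs]
      calc ‖∫ s in t..(t + h), (φ v s - φ (e n) s)‖
          ≤ M * ‖v - e n‖ * |t + h - t| :=
            intervalIntegral.norm_integral_le_of_norm_le_const fun s _ => hclose s
        _ = M * ‖v - e n‖ * |h| := by ring_nf
    have hpt : dist (φ (e n) t) (φ v t) ≤ M * ‖v - e n‖ := by
      rw [dist_eq_norm, ← norm_neg, neg_sub]
      exact hclose t
    calc dist ((∫ s in t..(t + h), φ v s) / h) (φ v t)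
        ≤ dist ((∫ s in t..(t + h), φ v s) / h) ((∫ s in t..(t + h), φ (e n) s) / h)
          + dist ((∫ s in t..(t + h), φ (e n) s) / h) (φ (e n) t)
          + dist (φ (e n) t) (φ v t) := dist_triangle4 _ _ _ _
      _ < ε := by
          have h1 : dist ((∫ s in t..(t + h), φ v s) / h)
              ((∫ s in t..(t + h), φ (e n) s) / h) ≤ ε / 3 := havg.trans hthird
          have h3 : dist (φ (e n) t) (φ v t) ≤ ε / 3 := hpt.trans hthird
          linarith [hh]
end
end

section
/- Let V be a real Banach space and suppose every Lipschitz curve γ: (0,1) → V* is differentiable in norm at almost every point (this holds in particular whenever V* has the Radon–Nikodým property). Then V* has the weak* Lebesgue density property: every f ∈ L^∞_*((0,1);V*) has a weak* representative g satisfying the weak* Lebesgue density theorem. -/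
open MeasureTheory Filter Set Topology NNReal ENNReal

noncomputable section

section Aux

variable {V : Type*} [NormedAddCommGroup V] [NormedSpace ℝ V]

theorem muIoo_lt_top (s : Set ℝ) : (volume.restrict (Set.Ioo (0:ℝ) 1)) s < ⊤ :=
  lt_of_le_of_lt (le_trans (measure_mono (Set.subset_univ _)) (by
    rw [Measure.restrict_apply MeasurableSet.univ, Set.univ_inter, Real.volume_Ioo]))
    ENNReal.ofReal_lt_top

theorem muIoo_toReal_le_one (s : Set ℝ) :
    ((volume.restrict (Set.Ioo (0:ℝ) 1)) s).toReal ≤ 1 := by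
  have h : (volume.restrict (Set.Ioo (0:ℝ) 1)) s ≤ ENNReal.ofReal 1 := by
    calc (volume.restrict (Set.Ioo (0:ℝ) 1)) s
        ≤ (volume.restrict (Set.Ioo (0:ℝ) 1)) Set.univ := measure_mono (Set.subset_univ _)
      _ = ENNReal.ofReal 1 := by
          rw [Measure.restrict_apply MeasurableSet.univ, Set.univ_inter, Real.volume_Ioo]; norm_num
  calc ((volume.restrict (Set.Ioo (0:ℝ) 1)) s).toReal
      ≤ (ENNReal.ofReal 1).toReal := ENNReal.toReal_mono ENNReal.ofReal_ne_top h
    _ = 1 := by simp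

/-- The primitive (Gelfand integral) of `f` as a dual element. -/
def gammaAux (f : ℝ → StrongDual ℝ V) (M' : ℝ) (hM'0 : 0 ≤ M')
    (hi : ∀ v : V, Integrable (fun s => f s v) (volume.restrict (Set.Ioo (0:ℝ) 1)))
    (hvb : ∀ v : V, ∀ᵐ s ∂(volume.restrict (Set.Ioo (0:ℝ) 1)), ‖f s v‖ ≤ M' * ‖v‖)
    (t : ℝ) : StrongDual ℝ V :=
  LinearMap.mkContinuous
    { toFun := fun v => ∫ s in Set.Iic t, f s v ∂(volume.restrict (Set.Ioo (0:ℝ) 1))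
      map_add' := fun v w => by
        simp only [map_add]
        exact integral_add ((hi v).integrableOn) ((hi w).integrableOn)
      map_smul' := fun c v => by
        simp only [ContinuousLinearMap.map_smul, RingHom.id_apply, smul_eq_mul]
        rw [← smul_eq_mul, ← integral_smul]
        simp [smul_eq_mul] } M'
    (fun v => by
      simp only [LinearMap.coe_mk, AddHom.coe_mk]
      calc ‖∫ s in Set.Iic t, f s v ∂(volume.restrict (Set.Ioo (0:ℝ) 1))‖
          ≤ (M' * ‖v‖) * ((volume.restrict (Set.Ioo (0:ℝ) 1)) (Set.Iic t)).toReal :=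
            norm_setIntegral_le_of_norm_le_const_ae (muIoo_lt_top _)
              (ae_restrict_of_ae (hvb v))
        _ ≤ M' * ‖v‖ :=
            mul_le_of_le_one_right (mul_nonneg hM'0 (norm_nonneg v)) (muIoo_toReal_le_one _))

theorem gammaAux_apply (f : ℝ → StrongDual ℝ V) (M' : ℝ) (hM'0 : 0 ≤ M')
    (hi : ∀ v : V, Integrable (fun s => f s v) (volume.restrict (Set.Ioo (0:ℝ) 1)))
    (hvb : ∀ v : V, ∀ᵐ s ∂(volume.restrict (Set.Ioo (0:ℝ) 1)), ‖f s v‖ ≤ M' * ‖v‖)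
    (t : ℝ) (v : V) :
    gammaAux f M' hM'0 hi hvb t v
      = ∫ s in Set.Iic t, f s v ∂(volume.restrict (Set.Ioo (0:ℝ) 1)) := rfl

end Aux

/-- Suppose every Lipschitz curve `γ : (0,1) → V*` is differentiable in norm at
almost every point (which holds in particular whenever `V*` has the Radon–Nikodým
property). Then `V*` has the weak* Lebesgue density property. -/
theorem hasWeakStarLDP_of_ae_norm_differentiable
    {V : Type*} [NormedAddCommGroup V] [NormedSpace ℝ V] [CompleteSpace V]
    (hdiff : ∀ γ : ℝ → StrongDual ℝ V,
      (∃ K : ℝ≥0, LipschitzOnWith K γ (Set.Ioo (0:ℝ) 1)) →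
      ∀ᵐ t ∂(volume.restrict (Set.Ioo (0:ℝ) 1)),
        ∃ d : StrongDual ℝ V,
          Filter.Tendsto (fun h : ℝ => h⁻¹ • (γ (t + h) - γ t))
            (nhdsWithin 0 {0}ᶜ) (nhds d)) :
    HasWeakStarLebesgueDensityProperty V := by
  intro f hmeas hbound
  classical
  set μ : Measure ℝ := volume.restrict (Set.Ioo (0:ℝ) 1) with hμdef
  obtain ⟨M, hM⟩ := hbound
  set M' : ℝ := max M 0 with hM'def
  have hM'0 : (0:ℝ) ≤ M' := le_max_right _ _
  have hMae : ∀ᵐ s ∂μ, ‖f s‖ ≤ M' := hM.mono fun s hs => hs.trans (le_max_left _ _)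
  have hvb : ∀ v : V, ∀ᵐ s ∂μ, ‖f s v‖ ≤ M' * ‖v‖ := by
    intro v
    filter_upwards [hMae] with s hs
    calc ‖f s v‖ ≤ ‖f s‖ * ‖v‖ := (f s).le_opNorm v
      _ ≤ M' * ‖v‖ := by gcongr
  have hi : ∀ v : V, Integrable (fun s => f s v) μ := fun v =>
    Integrable.mono' (integrable_const (M' * ‖v‖)) (hmeas v).aestronglyMeasurable (hvb v)
  set γ : ℝ → StrongDual ℝ V := gammaAux f M' hM'0 hi hvb with hγdef
  set φ : V → ℝ → ℝ := fun v => (Set.Ioo (0:ℝ) 1).indicator (fun s => f s v) with hφdef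
  -- the key splitting identity
  have hsub : ∀ t t' : ℝ, t ≤ t' → ∀ v : V,
      γ t' v - γ t v = ∫ s in Set.Ioc t t', φ v s := by
    intro t t' h v
    have h1 : γ t' v - γ t v = ∫ s in Set.Ioc t t', f s v ∂μ := by
      rw [hγdef, gammaAux_apply, gammaAux_apply, ← Set.Iic_union_Ioc_eq_Iic h,
        setIntegral_union (Set.Iic_disjoint_Ioc le_rfl) measurableSet_Ioc
          ((hi v).integrableOn) ((hi v).integrableOn)]
      ring
    rw [h1, hμdef, Measure.restrict_restrict measurableSet_Ioc,
      setIntegral_indicator measurableSet_Ioo]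
  -- Lipschitz estimate
  have hest : ∀ t t' : ℝ, t ≤ t' → ‖γ t' - γ t‖ ≤ M' * (t' - t) := by
    intro t t' h
    refine ContinuousLinearMap.opNorm_le_bound _ (by nlinarith) (fun v => ?_)
    rw [ContinuousLinearMap.sub_apply]
    have h1 : γ t' v - γ t v = ∫ s in Set.Ioc t t', f s v ∂μ := by
      rw [hγdef, gammaAux_apply, gammaAux_apply, ← Set.Iic_union_Ioc_eq_Iic h,
        setIntegral_union (Set.Iic_disjoint_Ioc le_rfl) measurableSet_Ioc
          ((hi v).integrableOn) ((hi v).integrableOn)]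
      ring
    rw [h1]
    calc ‖∫ s in Set.Ioc t t', f s v ∂μ‖
        ≤ (M' * ‖v‖) * (μ (Set.Ioc t t')).toReal :=
          norm_setIntegral_le_of_norm_le_const_ae (hμdef ▸ muIoo_lt_top _)
            (ae_restrict_of_ae (hvb v))
      _ ≤ M' * ‖v‖ * (t' - t) := by
          refine mul_le_mul_of_nonneg_left ?_ (by positivity)
          have h1 : μ (Set.Ioc t t') ≤ ENNReal.ofReal (t' - t) := by
            calc μ (Set.Ioc t t') ≤ volume (Set.Ioc t t') := by
                  rw [hμdef]; exact Measure.restrict_le_self _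
              _ = ENNReal.ofReal (t' - t) := Real.volume_Ioc
          calc (μ (Set.Ioc t t')).toReal
              ≤ (ENNReal.ofReal (t' - t)).toReal := ENNReal.toReal_mono ENNReal.ofReal_ne_top h1
            _ = t' - t := ENNReal.toReal_ofReal (by linarith)
      _ = M' * (t' - t) * ‖v‖ := by ring
  have hlip : LipschitzWith M'.toNNReal γ := by
    refine LipschitzWith.of_dist_le_mul (fun t t' => ?_)
    rw [dist_eq_norm, dist_eq_norm, Real.coe_toNNReal M' hM'0]
    rcases le_total t t' with h | h
    · rw [norm_sub_rev]
      calc ‖γ t' - γ t‖ ≤ M' * (t' - t) := hest t t' h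
        _ ≤ M' * ‖t - t'‖ := by
            refine mul_le_mul_of_nonneg_left ?_ hM'0
            rw [Real.norm_eq_abs, abs_sub_comm]
            exact le_abs_self _
    · calc ‖γ t - γ t'‖ ≤ M' * (t - t') := hest t' t h
        _ ≤ M' * ‖t - t'‖ := by
            refine mul_le_mul_of_nonneg_left ?_ hM'0
            rw [Real.norm_eq_abs]
            exact le_abs_self _
  have hae := hdiff γ ⟨M'.toNNReal, hlip.lipschitzOnWith⟩
  -- define g by choosing the norm-derivative where it exists
  set g : ℝ → StrongDual ℝ V := fun t =>
    if h : t ∈ Set.Ioo (0:ℝ) 1 ∧ ∃ d : StrongDual ℝ V,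
        Filter.Tendsto (fun h : ℝ => h⁻¹ • (γ (t + h) - γ t)) (nhdsWithin 0 {0}ᶜ) (nhds d)
      then h.2.choose else 0 with hgdef
  have hg0 : ∀ t : ℝ, t ∉ Set.Ioo (0:ℝ) 1 → g t = 0 := by
    intro t ht
    rw [hgdef]
    exact dif_neg (fun h => ht h.1)
  have hP : ∀ᵐ t ∂μ, t ∈ Set.Ioo (0:ℝ) 1 ∧
      Filter.Tendsto (fun h : ℝ => h⁻¹ • (γ (t + h) - γ t)) (nhdsWithin 0 {0}ᶜ) (nhds (g t)) := by
    filter_upwards [hae, hμdef ▸ ae_restrict_mem measurableSet_Ioo] with t h1 h2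
    refine ⟨h2, ?_⟩
    have hc : t ∈ Set.Ioo (0:ℝ) 1 ∧ ∃ d : StrongDual ℝ V,
        Filter.Tendsto (fun h : ℝ => h⁻¹ • (γ (t + h) - γ t)) (nhdsWithin 0 {0}ᶜ) (nhds d) :=
      ⟨h2, h1⟩
    have hgt : g t = hc.2.choose := by
      simp only [hgdef]
      rw [dif_pos hc]
    rw [hgt]
    exact hc.2.choose_spec
  -- g is a weak* representative of f
  have hrep : ∀ v : V, ∀ᵐ t ∂μ, f t v = g t v := by
    intro v
    have hφint : Integrable (φ v) volume := by
      rw [hφdef]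
      exact (integrable_indicator_iff measurableSet_Ioo).2 (hi v)
    have hvit := (IsUnifLocDoublingMeasure.vitaliFamily (volume : Measure ℝ) 1).ae_tendsto_average
      hφint.locallyIntegrable
    filter_upwards [ae_restrict_of_ae hvit, hP, hμdef ▸ ae_restrict_mem measurableSet_Ioo]
      with t hv hPt htm
    -- two limits of the same difference quotient along `𝓝[>] 0`
    have l1 : Filter.Tendsto (fun h : ℝ => (γ (t + h) v - γ t v) / h)
        (nhdsWithin (0:ℝ) (Set.Ioi 0)) (nhds (g t v)) := by
      have happ := ((ContinuousLinearMap.apply ℝ ℝ v).continuous.tendsto (g t)).comp hPt.2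
      have hmono : nhdsWithin (0:ℝ) (Set.Ioi 0) ≤ nhdsWithin 0 {0}ᶜ :=
        nhdsWithin_mono 0 (fun x hx => ne_of_gt hx)
      refine ((happ.mono_left hmono).congr (fun h => ?_))
      simp only [ContinuousLinearMap.apply_apply, Function.comp, smul_sub,
        ContinuousLinearMap.sub_apply, div_eq_inv_mul, ContinuousLinearMap.coe_smul',
        Pi.smul_apply, smul_eq_mul]
      ring
    have h2 : Filter.Tendsto (fun h : ℝ => t + h) (nhdsWithin (0:ℝ) (Set.Ioi 0))
        (nhdsWithin t (Set.Ioi t)) := by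
      refine tendsto_nhdsWithin_of_tendsto_nhds_of_eventually_within _ ?_ ?_
      · have hcont := (continuous_add_left t).tendsto 0
        rw [add_zero] at hcont
        exact hcont.mono_left nhdsWithin_le_nhds
      · filter_upwards [self_mem_nhdsWithin] with h hh
        exact lt_add_of_pos_right t hh
    have l2 : Filter.Tendsto (fun h : ℝ => (γ (t + h) v - γ t v) / h)
        (nhdsWithin (0:ℝ) (Set.Ioi 0)) (nhds (φ v t)) := by
      have h3 := (hv.comp (Real.tendsto_Icc_vitaliFamily_right t)).comp h2
      refine h3.congr' ?_
      filter_upwards [self_mem_nhdsWithin] with h hh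
      have hh' : (0:ℝ) < h := hh
      simp only [Function.comp]
      rw [setAverage_eq, MeasureTheory.integral_Icc_eq_integral_Ioc,
        ← hsub t (t + h) (by linarith) v, measureReal_def, Real.volume_Icc, smul_eq_mul]
      rw [show t + h - t = h by ring, ENNReal.toReal_ofReal hh'.le, div_eq_inv_mul]
    have huniq : g t v = φ v t := tendsto_nhds_unique l1 l2
    rw [huniq, hφdef]
    simp [Set.indicator_of_mem htm]
  -- hence `g ∙ v` agrees a.e. (w.r.t. volume) with the indicator function
  have hgφ : ∀ v : V, (fun s => g s v) =ᵐ[volume] φ v := by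
    intro v
    have h1 := hrep v
    rw [hμdef, ae_restrict_iff' measurableSet_Ioo] at h1
    filter_upwards [h1] with t ht
    by_cases h : t ∈ Set.Ioo (0:ℝ) 1
    · rw [← ht h, hφdef]
      simp [Set.indicator_of_mem h]
    · rw [hg0 t h, hφdef]
      simp [Set.indicator_of_notMem h]
  refine ⟨g, hrep, ?_⟩
  filter_upwards [hP] with t hPt
  intro v
  have hEq : ∀ h : ℝ, (∫ s in t..(t + h), g s v) = γ (t + h) v - γ t v := by
    intro h
    have hc : (∫ s in t..(t + h), g s v) = ∫ s in t..(t + h), φ v s :=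
      intervalIntegral.integral_congr_ae ((hgφ v).mono fun s hs _ => hs)
    rw [hc]
    rcases le_total t (t + h) with hh | hh
    · rw [intervalIntegral.integral_of_le hh, ← hsub t (t + h) hh v]
    · rw [intervalIntegral.integral_of_ge hh, ← hsub (t + h) t hh v]
      ring
  have happ := ((ContinuousLinearMap.apply ℝ ℝ v).continuous.tendsto (g t)).comp hPt.2
  refine happ.congr (fun h => ?_)
  rw [hEq h]
  simp only [ContinuousLinearMap.apply_apply, Function.comp, smul_sub,
    ContinuousLinearMap.sub_apply, div_eq_inv_mul, ContinuousLinearMap.coe_smul',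
    Pi.smul_apply, smul_eq_mul]
  ring
end
end

section
/- Let V be a real Banach space. The following are equivalent: (i) V* has the weak* Lebesgue density property; (ii) every absolutely continuous curve γ: (a,b) → V* (a < b real) is weak* differentiable at almost every t ∈ (a,b), i.e. for a.e. t there exists γ'(t) ∈ V* such that (γ(t+h) − γ(t))/h → γ'(t) in the weak* topology as h → 0. -/
open MeasureTheory Filter Set Topology NNReal ENNReal

noncomputable section

/-- `F : (a,b) → ℝ` is absolutely continuous: for every `ε > 0` there is `δ > 0` such
that for every finite family of pairwise disjoint subintervals of `(a,b)` of total
length `< δ`, the total variation of `F` over them is `< ε`. -/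
def AbsContOn (F : ℝ → ℝ) (a b : ℝ) : Prop :=
  ∀ ε > (0:ℝ), ∃ δ > (0:ℝ), ∀ (k : ℕ) (s t : Fin k → ℝ),
    (∀ i, s i ∈ Set.Ioo a b) → (∀ i, t i ∈ Set.Ioo a b) → (∀ i, s i ≤ t i) →
    (Pairwise fun i i' => Disjoint (Set.Ioo (s i) (t i)) (Set.Ioo (s i') (t i'))) →
    (∑ i, (t i - s i)) < δ → (∑ i, |F (t i) - F (s i)|) < ε

/-- `γ : (a,b) → X` is an absolutely continuous curve: it is rectifiable, i.e. its
length `ℓ(γ) = eVariationOn γ (a,b)` is finite, and `t ↦ ℓ(γ|_(a,t))` is an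
absolutely continuous real function. -/
def IsAbsContCurve {X : Type*} [PseudoMetricSpace X] (γ : ℝ → X) (a b : ℝ) : Prop :=
  eVariationOn γ (Set.Ioo a b) ≠ ⊤ ∧
  AbsContOn (fun t => (eVariationOn γ (Set.Ioo a t)).toReal) a b
namespace WSLDP

open scoped Classical

/-- A fixed ultrafilter extending `atTop` on `ℕ`. -/
def U : Ultrafilter ℕ := Ultrafilter.of Filter.atTop

lemma U_le : (U : Filter ℕ) ≤ Filter.atTop := Ultrafilter.of_le _

/-- Limit of a real sequence along `U`, when it exists. -/
def ulim (s : ℕ → ℝ) : ℝ :=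
  if h : ∃ x, Filter.Tendsto s (U : Filter ℕ) (𝓝 x) then h.choose else 0

lemma ulim_spec_of_bounded {s : ℕ → ℝ} {C : ℝ} (hC : ∀ n, |s n| ≤ C) :
    Filter.Tendsto s (U : Filter ℕ) (𝓝 (ulim s)) := by
  have hmem : ∀ n, s n ∈ Set.Icc (-C) C := fun n => abs_le.1 (hC n)
  have hcompact : IsCompact (Set.Icc (-C) C) := isCompact_Icc
  have hUF : (Ultrafilter.map s U : Filter ℝ) ≤ 𝓟 (Set.Icc (-C) C) := by
    rw [Ultrafilter.coe_map]
    exact Filter.le_principal_iff.2 (Filter.mem_map.2 (Filter.univ_mem' hmem))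
  obtain ⟨x, -, hx⟩ := hcompact.ultrafilter_le_nhds (Ultrafilter.map s U) hUF
  have hex : ∃ x, Filter.Tendsto s (U : Filter ℕ) (𝓝 x) := ⟨x, hx⟩
  classical
  rw [ulim, dif_pos hex]
  exact hex.choose_spec

lemma ulim_eq_of_tendsto {s : ℕ → ℝ} {x : ℝ} (hx : Filter.Tendsto s Filter.atTop (𝓝 x)) :
    ulim s = x := by
  have h' : Filter.Tendsto s (U : Filter ℕ) (𝓝 x) := hx.mono_left U_le
  have hex : ∃ y, Filter.Tendsto s (U : Filter ℕ) (𝓝 y) := ⟨x, h'⟩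
  classical
  rw [ulim, dif_pos hex]
  exact tendsto_nhds_unique hex.choose_spec h'

lemma ulim_add {s t : ℕ → ℝ} {C D : ℝ} (hs : ∀ n, |s n| ≤ C) (ht : ∀ n, |t n| ≤ D) :
    ulim (fun n => s n + t n) = ulim s + ulim t := by
  have hst : ∀ n, |s n + t n| ≤ C + D := fun n => (abs_add_le _ _).trans (add_le_add (hs n) (ht n))
  exact tendsto_nhds_unique (ulim_spec_of_bounded hst)
    ((ulim_spec_of_bounded hs).add (ulim_spec_of_bounded ht))

lemma ulim_smul {s : ℕ → ℝ} {C : ℝ} (c : ℝ) (hs : ∀ n, |s n| ≤ C) :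
    ulim (fun n => c * s n) = c * ulim s := by
  have hcs : ∀ n, |c * s n| ≤ |c| * C := by
    intro n; rw [abs_mul]
    exact mul_le_mul_of_nonneg_left (hs n) (abs_nonneg c)
  exact tendsto_nhds_unique (ulim_spec_of_bounded hcs)
    ((ulim_spec_of_bounded hs).const_mul c)

lemma ulim_abs_le {s : ℕ → ℝ} {C : ℝ} (hs : ∀ n, |s n| ≤ C) : |ulim s| ≤ C := by
  have := (ulim_spec_of_bounded hs).abs
  exact le_of_tendsto this (Filter.Eventually.of_forall hs)

/-- Lipschitz image of a null set in `ℝ` is null. -/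
lemma lipschitz_image_null {φ : ℝ → ℝ} {K : ℝ≥0} (hφ : LipschitzWith K φ) {N : Set ℝ}
    (hN : volume N = 0) : volume (φ '' N) = 0 := by
  have h1 : μH[(1:ℝ)] (φ '' N) ≤ (K : ℝ≥0∞) ^ (1:ℝ) * μH[(1:ℝ)] N :=
    hφ.hausdorffMeasure_image_le (by norm_num) N
  rw [MeasureTheory.hausdorffMeasure_real] at h1
  simpa [hN] using h1


/-! ### One-sided Lebesgue differentiation -/

lemma uIoc_subset_closedBall (t h : ℝ) : Set.uIoc t (t + h) ⊆ Metric.closedBall t |h| := by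
  intro y hy
  rw [Set.mem_uIoc] at hy
  rw [Metric.mem_closedBall, Real.dist_eq, abs_le]
  rcases abs_cases h with ⟨he, hp⟩ | ⟨he, hp⟩ <;>
    rcases hy with ⟨h1, h2⟩ | ⟨h1, h2⟩ <;> constructor <;> linarith

lemma ae_tendsto_interval_average {u : ℝ → ℝ} (hu : Integrable u) :
    ∀ᵐ t : ℝ, Filter.Tendsto (fun h : ℝ => (∫ s in t..(t + h), u s) / h)
      (𝓝[≠] 0) (𝓝 (u t)) := by
  filter_upwards [IsUnifLocDoublingMeasure.ae_tendsto_average_norm_sub (μ := volume)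
    (hu.locallyIntegrable) 1] with t ht
  have habs : Filter.Tendsto (fun h : ℝ => |h|) (𝓝[≠] (0:ℝ)) (𝓝[>] 0) :=
    tendsto_abs_nhdsNE_zero
  have havg : Filter.Tendsto (fun h : ℝ => ⨍ y in Metric.closedBall t |h|, ‖u y - u t‖)
      (𝓝[≠] (0:ℝ)) (𝓝 0) := by
    refine ht (fun _ : ℝ => t) (fun h : ℝ => |h|) habs ?_
    filter_upwards with h
    exact Metric.mem_closedBall_self (by positivity)
  have key : ∀ h : ℝ, h ≠ 0 →
      |(∫ s in t..(t + h), u s) / h - u t| ≤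
        2 * ⨍ y in Metric.closedBall t |h|, ‖u y - u t‖ := by
    intro h hh
    have hInt : IntervalIntegrable u volume t (t + h) := hu.intervalIntegrable
    have hconst : IntervalIntegrable (fun _ : ℝ => u t) volume t (t + h) :=
      intervalIntegrable_const
    have hsub : (∫ s in t..(t + h), (u s - u t)) = (∫ s in t..(t + h), u s) - h * u t := by
      rw [intervalIntegral.integral_sub hInt hconst, intervalIntegral.integral_const,
        smul_eq_mul]
      ring
    have hquot : (∫ s in t..(t + h), u s) / h - u t
        = (∫ s in t..(t + h), (u s - u t)) / h := by
      rw [hsub]; field_simp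
    have hIcb : IntegrableOn (fun y => ‖u y - u t‖) (Metric.closedBall t |h|) volume := by
      refine (Integrable.sub (hu.integrableOn) ?_).norm
      exact integrableOn_const (by rw [Real.volume_closedBall]; exact ofReal_ne_top)
    have h1 : |∫ s in t..(t + h), (u s - u t)| ≤
        ∫ y in Set.uIoc t (t + h), ‖u y - u t‖ := by
      simpa [Real.norm_eq_abs] using
        intervalIntegral.norm_integral_le_integral_norm_uIoc
          (f := fun s => u s - u t) (a := t) (b := t + h) (μ := volume)
    have h2 : (∫ y in Set.uIoc t (t + h), ‖u y - u t‖) ≤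
        ∫ y in Metric.closedBall t |h|, ‖u y - u t‖ := by
      refine MeasureTheory.setIntegral_mono_set hIcb ?_ ?_
      · filter_upwards with y using norm_nonneg _
      · exact HasSubset.Subset.eventuallyLE (uIoc_subset_closedBall t h)
    have hvol : (volume (Metric.closedBall t |h|)).toReal = 2 * |h| := by
      rw [Real.volume_closedBall, ENNReal.toReal_ofReal (by positivity)]
    have havg_eq : (⨍ y in Metric.closedBall t |h|, ‖u y - u t‖)
        = (2 * |h|)⁻¹ * ∫ y in Metric.closedBall t |h|, ‖u y - u t‖ := by
      rw [MeasureTheory.setAverage_eq, measureReal_def, hvol, smul_eq_mul]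
    have habsh : (0:ℝ) < |h| := abs_pos.2 hh
    rw [hquot, abs_div, havg_eq, div_le_iff₀ habsh]
    calc |∫ s in t..(t + h), (u s - u t)|
        ≤ ∫ y in Set.uIoc t (t + h), ‖u y - u t‖ := h1
      _ ≤ ∫ y in Metric.closedBall t |h|, ‖u y - u t‖ := h2
      _ = 2 * ((2 * |h|)⁻¹ * ∫ y in Metric.closedBall t |h|, ‖u y - u t‖) * |h| := by
          field_simp
  have h3 : Filter.Tendsto (fun h : ℝ => (∫ s in t..(t + h), u s) / h - u t)
      (𝓝[≠] (0:ℝ)) (𝓝 0) := by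
    refine squeeze_zero_norm' ?_ (by simpa using havg.const_mul 2)
    filter_upwards [self_mem_nhdsWithin] with h hh
    simpa [Real.norm_eq_abs] using key h hh
  have := h3.add_const (u t)
  simpa using this

/-! ### FTC for Lipschitz functions -/

lemma tendsto_seq_diffquot {F : ℝ → ℝ} {d x : ℝ} (hF : HasDerivAt F d x) :
    Filter.Tendsto (fun n : ℕ => (F (x + ((n : ℝ) + 1)⁻¹) - F x) * ((n : ℝ) + 1))
      Filter.atTop (𝓝 d) := by
  rw [hasDerivAt_iff_tendsto_slope] at hF
  have hpos : ∀ n : ℕ, (0:ℝ) < ((n : ℝ) + 1)⁻¹ := fun n => by positivity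
  have hinv : Filter.Tendsto (fun n : ℕ => ((n : ℝ) + 1)⁻¹) Filter.atTop (𝓝 0) := by
    simpa [one_div] using tendsto_one_div_add_atTop_nhds_zero_nat (𝕜 := ℝ)
  have hseq : Filter.Tendsto (fun n : ℕ => x + ((n : ℝ) + 1)⁻¹) Filter.atTop (𝓝[≠] x) := by
    refine tendsto_nhdsWithin_of_tendsto_nhds_of_eventually_within _ ?_ ?_
    · simpa using (tendsto_const_nhds (x := x)).add hinv
    · filter_upwards with n
      simp only [Set.mem_compl_iff, Set.mem_singleton_iff]
      have := hpos n; intro hcon; nlinarith [hcon]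
  have := hF.comp hseq
  refine this.congr fun n => ?_
  have hne : ((n : ℝ) + 1)⁻¹ ≠ 0 := ne_of_gt (hpos n)
  simp only [Function.comp_apply, slope_def_field, add_sub_cancel_left]
  rw [div_eq_mul_inv, inv_inv]

lemma abs_deriv_le_of_lipschitz {u : ℝ → ℝ} {C : ℝ≥0} (hu : LipschitzWith C u) (τ : ℝ) :
    |deriv u τ| ≤ (C : ℝ) := by
  by_cases hd : DifferentiableAt ℝ u τ
  · have h := hd.hasDerivAt
    rw [hasDerivAt_iff_tendsto_slope] at h
    refine le_of_tendsto h.abs ?_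
    filter_upwards [self_mem_nhdsWithin] with y hy
    have hne : y - τ ≠ 0 := sub_ne_zero.2 hy
    rw [slope_def_field, abs_div]
    rw [div_le_iff₀ (abs_pos.2 hne)]
    have := hu.dist_le_mul y τ
    rw [Real.dist_eq, Real.dist_eq] at this
    exact this
  · rw [deriv_zero_of_not_differentiableAt hd]
    simp

lemma intervalIntegrable_deriv_of_lipschitz {u : ℝ → ℝ} {C : ℝ≥0} (hu : LipschitzWith C u)
    (a b : ℝ) : IntervalIntegrable (deriv u) volume a b := by
  rw [intervalIntegrable_iff]
  refine Integrable.mono' (g := fun _ : ℝ => (C : ℝ)) ?_ ?_ ?_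
  · exact integrableOn_const measure_Ioc_lt_top.ne
  · exact (measurable_deriv u).aestronglyMeasurable.restrict
  · filter_upwards with τ
    simpa [Real.norm_eq_abs] using abs_deriv_le_of_lipschitz hu τ

lemma integral_deriv_of_lipschitz {u : ℝ → ℝ} {C : ℝ≥0} (hu : LipschitzWith C u) (s t : ℝ) :
    (∫ τ in s..t, deriv u τ) = u t - u s := by
  have main : ∀ s t : ℝ, s ≤ t → (∫ τ in s..t, deriv u τ) = u t - u s := by
    intro s t hst
    have hucont : Continuous u := hu.continuous
    have huint : ∀ a b : ℝ, IntervalIntegrable u volume a b := fun a b =>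
      hucont.intervalIntegrable a b
    -- the difference quotients
    set fn : ℕ → ℝ → ℝ := fun n τ => (u (τ + ((n : ℝ) + 1)⁻¹) - u τ) * ((n : ℝ) + 1) with hfn
    -- step A : value of the integrals of fn
    have hA : ∀ n : ℕ, (∫ τ in s..t, fn n τ)
        = ((∫ τ in t..(t + ((n : ℝ) + 1)⁻¹), u τ) - ∫ τ in s..(s + ((n : ℝ) + 1)⁻¹), u τ)
            * ((n : ℝ) + 1) := by
      intro n
      set d : ℝ := ((n : ℝ) + 1)⁻¹ with hd
      have h1 : (∫ τ in s..t, (u (τ + d) - u τ))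
          = (∫ τ in (s + d)..(t + d), u τ) - ∫ τ in s..t, u τ := by
        have hcont2 : Continuous fun τ : ℝ => u (τ + d) :=
          hucont.comp (continuous_id.add continuous_const)
        rw [intervalIntegral.integral_sub (hcont2.intervalIntegrable s t) (huint s t)]
        congr 1
        exact intervalIntegral.integral_comp_add_right u d
      have h2 : (∫ τ in s..(s + d), u τ) + (∫ τ in (s + d)..(t + d), u τ)
          = ∫ τ in s..(t + d), u τ :=
        intervalIntegral.integral_add_adjacent_intervals (huint _ _) (huint _ _)
      have h3 : (∫ τ in s..t, u τ) + (∫ τ in t..(t + d), u τ)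
          = ∫ τ in s..(t + d), u τ :=
        intervalIntegral.integral_add_adjacent_intervals (huint _ _) (huint _ _)
      have h4 : (∫ τ in s..t, fn n τ) = (∫ τ in s..t, (u (τ + d) - u τ)) * ((n : ℝ) + 1) := by
        rw [← intervalIntegral.integral_mul_const]
      rw [h4, h1]
      have : (∫ τ in (s + d)..(t + d), u τ) - ∫ τ in s..t, u τ
          = (∫ τ in t..(t + d), u τ) - ∫ τ in s..(s + d), u τ := by linarith
      rw [this]
    -- step B : limits of endpoint averages
    have hB : ∀ x : ℝ, Filter.Tendsto
        (fun n : ℕ => (∫ τ in x..(x + ((n : ℝ) + 1)⁻¹), u τ) * ((n : ℝ) + 1))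
        Filter.atTop (𝓝 (u x)) := by
      intro x
      have hΦ : HasDerivAt (fun r => ∫ τ in x..r, u τ) (u x) x :=
        intervalIntegral.integral_hasDerivAt_right (huint x x)
          (hucont.aestronglyMeasurable.stronglyMeasurableAtFilter) hucont.continuousAt
      have := tendsto_seq_diffquot hΦ
      simpa using this
    -- step C+D+E : dominated convergence
    have hC : ∀ᵐ τ : ℝ, Filter.Tendsto (fun n => fn n τ) Filter.atTop (𝓝 (deriv u τ)) := by
      filter_upwards [hu.ae_differentiableAt (μ := volume)] with τ hτ
      simpa [hfn] using tendsto_seq_diffquot hτ.hasDerivAt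
    have hCae : ∀ᵐ τ ∂(volume : Measure ℝ), τ ∈ Set.uIoc s t →
        Filter.Tendsto (fun n => fn n τ) Filter.atTop (𝓝 (deriv u τ)) := by
      filter_upwards [hC] with τ hτ _ using hτ
    have hD : ∀ n : ℕ, ∀ τ : ℝ, ‖fn n τ‖ ≤ (C : ℝ) := by
      intro n τ
      have hdist := hu.dist_le_mul (τ + ((n : ℝ) + 1)⁻¹) τ
      rw [Real.dist_eq, Real.dist_eq, add_sub_cancel_left] at hdist
      have hpos : (0:ℝ) < ((n : ℝ) + 1)⁻¹ := by positivity
      rw [hfn, Real.norm_eq_abs, abs_mul, abs_of_pos (by positivity : (0:ℝ) < (n : ℝ) + 1)]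
      calc |u (τ + ((n : ℝ) + 1)⁻¹) - u τ| * ((n : ℝ) + 1)
          ≤ (C : ℝ) * |((n : ℝ) + 1)⁻¹| * ((n : ℝ) + 1) := by
            exact mul_le_mul_of_nonneg_right hdist (by positivity)
        _ = (C : ℝ) := by
            rw [abs_of_pos hpos]; field_simp
    have hE : Filter.Tendsto (fun n => ∫ τ in s..t, fn n τ) Filter.atTop
        (𝓝 (∫ τ in s..t, deriv u τ)) := by
      refine intervalIntegral.tendsto_integral_filter_of_dominated_convergence
        (fun _ => (C : ℝ)) ?_ ?_ ?_ hCae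
      · filter_upwards with n
        have hcont2 : Continuous (fn n) := by
          rw [hfn]
          exact ((hucont.comp (continuous_id.add continuous_const)).sub
            hucont).mul continuous_const
        exact hcont2.aestronglyMeasurable.restrict
      · filter_upwards with n
        filter_upwards with τ _
        exact hD n τ
      · exact intervalIntegrable_const
    -- combine
    have hRHS : Filter.Tendsto (fun n : ℕ =>
        ((∫ τ in t..(t + ((n : ℝ) + 1)⁻¹), u τ) - ∫ τ in s..(s + ((n : ℝ) + 1)⁻¹), u τ)
          * ((n : ℝ) + 1)) Filter.atTop (𝓝 (u t - u s)) := by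
      have := (hB t).sub (hB s)
      refine this.congr fun n => ?_
      ring
    have : Filter.Tendsto (fun n => ∫ τ in s..t, fn n τ) Filter.atTop (𝓝 (u t - u s)) := by
      refine hRHS.congr fun n => (hA n).symm
    exact tendsto_nhds_unique hE this
  rcases le_total s t with h | h
  · exact main s t h
  · have := main t s h
    rw [intervalIntegral.integral_symm]
    rw [this]; ring

/-! ### Variation lemmas -/

section Variation

variable {E : Type*} [PseudoEMetricSpace E]

lemma edist_min_le (γ : ℝ → E) {K : ℝ≥0} (hγ : LipschitzWith K γ) {x y : ℝ} (c : ℝ)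
    (hxy : x ≤ y) :
    edist (γ y) (γ x) ≤ edist (γ (min y c)) (γ (min x c)) +
      ENNReal.ofReal ((K : ℝ) * ((y - min y c) - (x - min x c))) := by
  have hK : (0:ℝ) ≤ (K : ℝ) := K.coe_nonneg
  have lip : ∀ p q : ℝ, edist (γ p) (γ q) ≤ ENNReal.ofReal ((K : ℝ) * |p - q|) := by
    intro p q
    have := hγ.edist_le_mul p q
    rwa [edist_dist, Real.dist_eq, ← ENNReal.ofReal_coe_nnreal, ← ENNReal.ofReal_mul hK] at this

  rcases le_total y c with h | h
  · rw [min_eq_left h, min_eq_left (hxy.trans h)]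
    simp
  · rcases le_total x c with h' | h'
    · -- x ≤ c ≤ y
      rw [min_eq_right h, min_eq_left h', show y - c - (x - x) = y - c by ring]
      calc edist (γ y) (γ x) ≤ edist (γ y) (γ c) + edist (γ c) (γ x) := edist_triangle _ _ _
        _ ≤ ENNReal.ofReal ((K : ℝ) * (y - c)) + edist (γ c) (γ x) := by
            refine add_le_add_left ?_ _
            have := lip y c
            rwa [abs_of_nonneg (by linarith)] at this
        _ = edist (γ c) (γ x) + ENNReal.ofReal ((K : ℝ) * (y - c)) := by rw [add_comm]
    · -- c ≤ x ≤ y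
      rw [min_eq_right (h'.trans hxy), min_eq_right h', edist_self, zero_add,
        show y - c - (x - c) = y - x by ring]
      have := lip y x
      rwa [abs_of_nonneg (by linarith)] at this

lemma eVariationOn_Ioo_le_add_aux (γ : ℝ → E) {K : ℝ≥0} (hγ : LipschitzWith K γ)
    {a s t η : ℝ} (hst : s ≤ t) (hη : 0 < η) (hηa : a < s - η) :
    eVariationOn γ (Set.Ioo a t) ≤
      eVariationOn γ (Set.Ioo a s) + ENNReal.ofReal ((K : ℝ) * (t - s + η)) := by
  have hK : (0:ℝ) ≤ (K : ℝ) := K.coe_nonneg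
  set c : ℝ := s - η with hc
  refine iSup_le ?_
  rintro ⟨n, u, hu, us⟩
  set u' : ℕ → ℝ := fun i => min (u i) c with hu'def
  have hu' : Monotone u' := fun i j hij => min_le_min (hu hij) le_rfl
  have us' : ∀ i, u' i ∈ Set.Ioo a s := by
    intro i
    exact ⟨lt_min (us i).1 (by linarith), lt_of_le_of_lt (min_le_right _ _) (by linarith)⟩
  set d : ℕ → ℝ := fun i => u i - u' i with hddef
  have hd_eq : ∀ i, d i = max (u i - c) 0 := by
    intro i
    rcases le_total (u i) c with h | h
    · simp [hddef, hu'def, min_eq_left h, max_eq_right (by linarith : u i - c ≤ 0)]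
    · simp [hddef, hu'def, min_eq_right h, max_eq_left (by linarith : (0:ℝ) ≤ u i - c)]
  have hd_mono : Monotone d := by
    intro i j hij
    rw [hd_eq i, hd_eq j]
    exact max_le_max (by have := hu hij; linarith) le_rfl
  have hd0 : 0 ≤ d 0 := by rw [hd_eq]; exact le_max_right _ _
  have hdn : d n ≤ t - s + η := by
    rw [hd_eq]
    refine max_le (by have := (us n).2; linarith) (by linarith)
  calc (∑ i ∈ Finset.range n, edist (γ (u (i + 1))) (γ (u i)))
      ≤ ∑ i ∈ Finset.range n, (edist (γ (u' (i + 1))) (γ (u' i)) +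
          ENNReal.ofReal ((K : ℝ) * (d (i + 1) - d i))) := by
        refine Finset.sum_le_sum fun i _ => ?_
        have := edist_min_le γ hγ c (hu (Nat.le_succ i))
        simpa [hddef, hu'def] using this
    _ = (∑ i ∈ Finset.range n, edist (γ (u' (i + 1))) (γ (u' i))) +
          ∑ i ∈ Finset.range n, ENNReal.ofReal ((K : ℝ) * (d (i + 1) - d i)) := by
        rw [Finset.sum_add_distrib]
    _ ≤ eVariationOn γ (Set.Ioo a s) + ENNReal.ofReal ((K : ℝ) * (t - s + η)) := by
        refine add_le_add (eVariationOn.sum_le (f := γ) (n := n) hu' us') ?_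
        have hnn : ∀ i ∈ Finset.range n, 0 ≤ (K : ℝ) * (d (i + 1) - d i) := by
          intro i _
          have := hd_mono (Nat.le_succ i)
          exact mul_nonneg hK (by linarith)
        rw [← ENNReal.ofReal_sum_of_nonneg hnn]
        refine ENNReal.ofReal_le_ofReal ?_
        rw [← Finset.mul_sum, Finset.sum_range_sub (f := d)]
        refine mul_le_mul_of_nonneg_left (by linarith) hK

lemma eVariationOn_Ioo_le_add (γ : ℝ → E) {K : ℝ≥0} (hγ : LipschitzWith K γ)
    {a s t : ℝ} (has : a < s) (hst : s ≤ t) :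
    eVariationOn γ (Set.Ioo a t) ≤
      eVariationOn γ (Set.Ioo a s) + ENNReal.ofReal ((K : ℝ) * (t - s)) := by
  have hK : (0:ℝ) ≤ (K : ℝ) := K.coe_nonneg
  refine ENNReal.le_of_forall_pos_le_add fun ε hε hlt => ?_
  set η : ℝ := min ((s - a) / 2) ((ε : ℝ) / ((K : ℝ) + 1)) with hηdef
  have hη : 0 < η := lt_min (by linarith) (by positivity)
  have hηa : a < s - η := by
    have : η ≤ (s - a) / 2 := min_le_left _ _
    linarith
  have h1 := eVariationOn_Ioo_le_add_aux γ hγ hst hη hηa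
  refine h1.trans ?_
  rw [add_assoc]
  refine add_le_add_right ?_ _
  have h2 : (K : ℝ) * (t - s + η) = (K : ℝ) * (t - s) + (K : ℝ) * η := by ring
  rw [h2]
  refine (ENNReal.ofReal_add_le).trans (add_le_add_right ?_ _)
  have h3 : (K : ℝ) * η ≤ (ε : ℝ) := by
    have hη2 : η ≤ (ε : ℝ) / ((K : ℝ) + 1) := min_le_right _ _
    have : (K : ℝ) * η ≤ (K : ℝ) * ((ε : ℝ) / ((K : ℝ) + 1)) :=
      mul_le_mul_of_nonneg_left hη2 hK
    refine this.trans ?_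
    have hε' : (0:ℝ) ≤ (ε : ℝ) := ε.coe_nonneg
    rw [mul_comm, div_mul_eq_mul_div, div_le_iff₀ (by positivity : (0:ℝ) < (K : ℝ) + 1)]
    nlinarith
  calc ENNReal.ofReal ((K : ℝ) * η) ≤ ENNReal.ofReal (ε : ℝ) :=
        ENNReal.ofReal_le_ofReal h3
    _ = (ε : ℝ≥0∞) := ENNReal.ofReal_coe_nnreal

lemma eVariationOn_Icc_le (γ : ℝ → E) {K : ℝ≥0} (hγ : LipschitzWith K γ)
    {p q : ℝ} (hpq : p ≤ q) :
    eVariationOn γ (Set.Icc p q) ≤ ENNReal.ofReal ((K : ℝ) * (q - p)) := by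
  have hK : (0:ℝ) ≤ (K : ℝ) := K.coe_nonneg
  have h1 : eVariationOn (γ ∘ id) (Set.Icc p q) ≤
      (K : ℝ≥0∞) * eVariationOn (id : ℝ → ℝ) (Set.Icc p q) :=
    hγ.lipschitzOnWith.comp_eVariationOn_le (Set.mapsTo_univ _ _)
  have h2 : eVariationOn (id : ℝ → ℝ) (Set.Icc p q) ≤ ENNReal.ofReal (q - p) := by
    have h3 := MonotoneOn.eVariationOn_le (monotoneOn_id (s := Set.Icc p q))
      (Set.left_mem_Icc.2 hpq) (Set.right_mem_Icc.2 hpq)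
    simpa using h3
  calc eVariationOn γ (Set.Icc p q) = eVariationOn (γ ∘ id) (Set.Icc p q) := rfl
    _ ≤ (K : ℝ≥0∞) * eVariationOn (id : ℝ → ℝ) (Set.Icc p q) := h1
    _ ≤ (K : ℝ≥0∞) * ENNReal.ofReal (q - p) := mul_le_mul_right h2 _
    _ = ENNReal.ofReal ((K : ℝ) * (q - p)) := by
        rw [ENNReal.ofReal_mul hK, ENNReal.ofReal_coe_nnreal]

end Variation

/-! ### Definitions copied from the problem statement (restated locally for the aux lemmas) -/

section Core

variable {V : Type*} [NormedAddCommGroup V] [NormedSpace ℝ V]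

/-- weak* differentiability at a point -/
def WStarDiff (γ : ℝ → StrongDual ℝ V) (t : ℝ) : Prop :=
  ∃ Λ : StrongDual ℝ V, ∀ v : V,
    Filter.Tendsto (fun h : ℝ => (γ (t + h) v - γ t v) / h) (𝓝[≠] (0:ℝ)) (𝓝 (Λ v))

lemma eval_lipschitz {g : ℝ → StrongDual ℝ V} {K : ℝ≥0} (hg : LipschitzWith K g)
    (v : V) : LipschitzWith (K * ‖v‖₊) (fun t => g t v) := by
  refine LipschitzWith.of_dist_le_mul fun s t => ?_
  have h1 : dist (g s v) (g t v) = ‖(g s - g t) v‖ := by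
    rw [dist_eq_norm, ContinuousLinearMap.sub_apply]
  have h2 : ‖(g s - g t) v‖ ≤ ‖g s - g t‖ * ‖v‖ := (g s - g t).le_opNorm v
  have h3 : ‖g s - g t‖ ≤ (K : ℝ) * dist s t := by
    rw [← dist_eq_norm]; exact hg.dist_le_mul s t
  have h4 : ((K * ‖v‖₊ : ℝ≥0) : ℝ) = (K : ℝ) * ‖v‖ := by push_cast; rfl
  rw [h1, h4]
  calc ‖(g s - g t) v‖ ≤ ‖g s - g t‖ * ‖v‖ := h2
    _ ≤ (K : ℝ) * dist s t * ‖v‖ := by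
        exact mul_le_mul_of_nonneg_right h3 (norm_nonneg v)
    _ = (K : ℝ) * ‖v‖ * dist s t := by ring

lemma quot_bound {g : ℝ → StrongDual ℝ V} {K : ℝ≥0} (hg : LipschitzWith K g)
    (t : ℝ) (v : V) (n : ℕ) :
    |(g (t + ((n : ℝ) + 1)⁻¹) v - g t v) * ((n : ℝ) + 1)| ≤ (K : ℝ) * ‖v‖ := by
  have h := (eval_lipschitz hg v).dist_le_mul (t + ((n : ℝ) + 1)⁻¹) t
  rw [Real.dist_eq, Real.dist_eq, add_sub_cancel_left] at h
  have hpos : (0:ℝ) < ((n : ℝ) + 1)⁻¹ := by positivity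
  have h4 : ((K * ‖v‖₊ : ℝ≥0) : ℝ) = (K : ℝ) * ‖v‖ := by push_cast; rfl
  rw [h4] at h
  rw [abs_mul, abs_of_pos (by positivity : (0:ℝ) < (n : ℝ) + 1)]
  calc |g (t + ((n : ℝ) + 1)⁻¹) v - g t v| * ((n : ℝ) + 1)
      ≤ ((K : ℝ) * ‖v‖ * |((n : ℝ) + 1)⁻¹|) * ((n : ℝ) + 1) :=
        mul_le_mul_of_nonneg_right h (by positivity)
    _ = (K : ℝ) * ‖v‖ := by
        rw [abs_of_pos hpos]; field_simp

/-- The core lemma: if `V*` has the weak* Lebesgue density property then every Lipschitz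
curve into `V*` is weak* differentiable a.e. on `(0,1)`. -/
lemma core_lipschitz (hWS : HasWeakStarLebesgueDensityProperty V)
    {g : ℝ → StrongDual ℝ V} {K : ℝ≥0} (hg : LipschitzWith K g) :
    ∀ᵐ t ∂(volume.restrict (Set.Ioo (0:ℝ) 1)), WStarDiff g t := by
  classical
  set e : ℝ → V → ℝ :=
    fun t v => ulim (fun n : ℕ => (g (t + ((n : ℝ) + 1)⁻¹) v - g t v) * ((n : ℝ) + 1))
    with he_def
  have he_bound : ∀ t v, |e t v| ≤ (K : ℝ) * ‖v‖ := fun t v =>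
    ulim_abs_le (fun n => quot_bound hg t v n)
  have he_add : ∀ t v w, e t (v + w) = e t v + e t w := by
    intro t v w
    have : (fun n : ℕ => (g (t + ((n : ℝ) + 1)⁻¹) (v + w) - g t (v + w)) * ((n : ℝ) + 1))
        = fun n : ℕ => ((g (t + ((n : ℝ) + 1)⁻¹) v - g t v) * ((n : ℝ) + 1))
          + ((g (t + ((n : ℝ) + 1)⁻¹) w - g t w) * ((n : ℝ) + 1)) := by
      funext n
      simp only [map_add]
      ring
    rw [he_def]
    simp only []
    rw [this]
    exact ulim_add (fun n => quot_bound hg t v n) (fun n => quot_bound hg t w n)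
  have he_smul : ∀ t (c : ℝ) v, e t (c • v) = c * e t v := by
    intro t c v
    have : (fun n : ℕ => (g (t + ((n : ℝ) + 1)⁻¹) (c • v) - g t (c • v)) * ((n : ℝ) + 1))
        = fun n : ℕ => c * ((g (t + ((n : ℝ) + 1)⁻¹) v - g t v) * ((n : ℝ) + 1)) := by
      funext n
      simp only [_root_.map_smul, smul_eq_mul]
      ring
    rw [he_def]
    simp only []
    rw [this]
    exact ulim_smul c (fun n => quot_bound hg t v n)
  set f : ℝ → StrongDual ℝ V := fun t => LinearMap.mkContinuous
    { toFun := e t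
      map_add' := he_add t
      map_smul' := by intro c v; simpa using he_smul t c v } (K : ℝ)
    (fun v => by simpa [Real.norm_eq_abs] using he_bound t v) with hf_def
  have hf_apply : ∀ t v, f t v = e t v := fun t v => rfl
  -- f t v equals the derivative of the scalar function a.e.
  have hfv : ∀ v : V, ∀ᵐ t ∂(volume : Measure ℝ), f t v = deriv (fun τ => g τ v) t := by
    intro v
    filter_upwards [(eval_lipschitz hg v).ae_differentiableAt (μ := volume)] with t ht
    have := tendsto_seq_diffquot (F := fun τ => g τ v) ht.hasDerivAt
    rw [hf_apply, he_def]
    exact ulim_eq_of_tendsto this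
  have hmeas : ∀ v : V, AEMeasurable (fun t => f t v) (volume.restrict (Set.Ioo (0:ℝ) 1)) := by
    intro v
    have hae : (fun t => f t v) =ᵐ[(volume : Measure ℝ)] deriv (fun τ => g τ v) := hfv v
    exact (((measurable_deriv (fun τ => g τ v)).aemeasurable).congr hae.symm).restrict
  have hnorm : ∃ M : ℝ, ∀ᵐ t ∂(volume.restrict (Set.Ioo (0:ℝ) 1)), ‖f t‖ ≤ M := by
    refine ⟨(K : ℝ), Filter.Eventually.of_forall fun t => ?_⟩
    exact LinearMap.mkContinuous_norm_le _ K.coe_nonneg _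
  obtain ⟨g₀, hrep, hleb⟩ := hWS f hmeas hnorm
  -- FTC
  have hftc : ∀ (v : V) (p q : ℝ), (∫ τ in p..q, f τ v) = g q v - g p v := by
    intro v p q
    rw [← integral_deriv_of_lipschitz (eval_lipschitz hg v) p q]
    refine intervalIntegral.integral_congr_ae ?_
    filter_upwards [hfv v] with τ hτ _
    exact hτ
  have hrep' : ∀ v : V, ∀ᵐ τ ∂(volume : Measure ℝ),
      τ ∈ Set.Ioo (0:ℝ) 1 → f τ v = g₀ τ v := fun v =>
    (ae_restrict_iff' measurableSet_Ioo).mp (hrep v)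
  filter_upwards [hleb, ae_restrict_mem measurableSet_Ioo] with t hlp htm
  refine ⟨g₀ t, fun v => ?_⟩
  have hδ : (0:ℝ) < min t (1 - t) := lt_min htm.1 (by linarith [htm.2])
  have hev : ∀ᶠ h in 𝓝[≠] (0:ℝ),
      (g (t + h) v - g t v) / h = (∫ s in t..(t + h), g₀ s v) / h := by
    have hball : ∀ᶠ h in 𝓝 (0:ℝ), |h| < min t (1 - t) := by
      have := Metric.ball_mem_nhds (0:ℝ) hδ
      filter_upwards [this] with h hh
      simpa [Real.dist_eq] using hh
    filter_upwards [hball.filter_mono nhdsWithin_le_nhds] with h hh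
    have hsub : Set.uIoc t (t + h) ⊆ Set.Ioo (0:     ℝ) 1 := by
      refine (uIoc_subset_closedBall t h).trans ?_
      intro y hy
      rw [Metric.mem_closedBall, Real.dist_eq] at hy
      constructor
      · have := abs_le.1 hy; cases' this with h1 h2
        have := lt_min_iff.1 hh
        linarith [this.1]
      · have := abs_le.1 hy; cases' this with h1 h2
        have := lt_min_iff.1 hh
        linarith [this.2]
    have : (∫ s in t..(t + h), f s v) = ∫ s in t..(t + h), g₀ s v := by
      refine intervalIntegral.integral_congr_ae ?_
      filter_upwards [hrep' v] with s hs hmem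
      exact hs (hsub hmem)
    rw [← this, hftc v t (t + h)]
  have hev' : (fun h : ℝ => (∫ s in t..(t + h), g₀ s v) / h) =ᶠ[𝓝[≠] (0:ℝ)]
      (fun h : ℝ => (g (t + h) v - g t v) / h) := hev.mono fun h hh => hh.symm
  exact (hlp v).congr' hev'

lemma core_interval (hWS : HasWeakStarLebesgueDensityProperty V)
    {g : ℝ → StrongDual ℝ V} {K : ℝ≥0} (hg : LipschitzWith K g)
    {c d : ℝ} (hcd : c < d) :
    volume ({σ | ¬ WStarDiff g σ} ∩ Set.Ioo c d) = 0 := by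
  set φ : ℝ → ℝ := fun u => c + (d - c) * u with hφdef
  have hdc : (0:ℝ) < d - c := by linarith
  have hφlip : LipschitzWith (d - c).toNNReal φ := by
    refine LipschitzWith.of_dist_le_mul fun u u' => ?_
    rw [Real.dist_eq, Real.dist_eq, Real.coe_toNNReal _ (by linarith)]
    have : φ u - φ u' = (d - c) * (u - u') := by rw [hφdef]; ring
    rw [this, abs_mul, abs_of_pos hdc]
  have hG : LipschitzWith (K * (d - c).toNNReal) (g ∘ φ) := hg.comp hφlip
  have hGae := core_lipschitz hWS hG
  have hnull : volume ({u | ¬ WStarDiff (g ∘ φ) u} ∩ Set.Ioo (0:ℝ) 1) = 0 := by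
    rw [MeasureTheory.ae_iff, Measure.restrict_apply' measurableSet_Ioo] at hGae
    exact hGae
  have himg := lipschitz_image_null hφlip hnull
  refine measure_mono_null ?_ himg
  rintro σ ⟨hbad, hσ⟩
  refine ⟨(σ - c) / (d - c), ⟨?_, ?_⟩, ?_⟩
  · -- ¬ WStarDiff G u
    intro hGdiff
    apply hbad
    obtain ⟨Λ, hΛ⟩ := hGdiff
    refine ⟨(d - c)⁻¹ • Λ, fun v => ?_⟩
    have hmap : Filter.Tendsto (fun h : ℝ => h / (d - c)) (𝓝[≠] (0:ℝ)) (𝓝[≠] (0:ℝ)) := by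
      refine tendsto_nhdsWithin_of_tendsto_nhds_of_eventually_within _ ?_ ?_
      · have := (continuous_id.div_const (d - c)).tendsto (0:ℝ)
        simpa using this.mono_left nhdsWithin_le_nhds
      · filter_upwards [self_mem_nhdsWithin] with h hh
        exact div_ne_zero hh (by linarith)
    have hcomp := ((hΛ v).comp hmap).div_const (d - c)
    refine hcomp.congr' ?_ |>.mono_right (le_of_eq ?_)
    · filter_upwards [self_mem_nhdsWithin] with h hh
      have hk : h / (d - c) ≠ 0 := div_ne_zero hh (by linarith)
      have harg : (σ - c) / (d - c) + h / (d - c) = (σ + h - c)/(d - c) := by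
        field_simp
        ring
      have hφ1 : φ ((σ - c) / (d - c) + h / (d - c)) = σ + h := by
        rw [harg, hφdef]; field_simp; ring
      have hφ2 : φ ((σ - c) / (d - c)) = σ := by
        rw [hφdef]; field_simp; ring
      simp only [Function.comp_apply, hφ1, hφ2]
      rw [div_div, div_mul_cancel₀ _ (by linarith : d - c ≠ 0)]
    · congr 1
      rw [ContinuousLinearMap.smul_apply, smul_eq_mul, div_eq_inv_mul]
  · -- u ∈ Ioo 0 1
    constructor
    · exact div_pos (by linarith [hσ.1]) hdc
    · rw [div_lt_one hdc]; linarith [hσ.2]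
  · rw [hφdef]; field_simp; ring

lemma lipschitz_ae_wstar_diff (hWS : HasWeakStarLebesgueDensityProperty V)
    {g : ℝ → StrongDual ℝ V} {K : ℝ≥0} (hg : LipschitzWith K g) :
    ∀ᵐ σ ∂(volume : Measure ℝ), WStarDiff g σ := by
  rw [MeasureTheory.ae_iff]
  have hsub : {σ | ¬ WStarDiff g σ} ⊆
      ⋃ n : ℕ, ({σ | ¬ WStarDiff g σ} ∩ Set.Ioo (-((n:ℝ)+1)) ((n:ℝ)+1)) := by
    intro σ hσ
    obtain ⟨n, hn⟩ := exists_nat_gt |σ|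
    refine Set.mem_iUnion.2 ⟨n, hσ, ?_, ?_⟩
    · have := abs_lt.1 hn; linarith [this.1]
    · have := abs_lt.1 hn; linarith [this.2]
  refine measure_mono_null hsub (measure_iUnion_null fun n => ?_)
  refine core_interval hWS hg ?_
  have : (0:ℝ) ≤ (n:ℝ) := Nat.cast_nonneg n
  linarith


lemma forward_interval (hWS : HasWeakStarLebesgueDensityProperty V)
    {γ : ℝ → StrongDual ℝ V} {a b a' b' : ℝ}
    (haa : a < a') (hab' : a' < b') (hbb : b' < b)
    (hfin : eVariationOn γ (Set.Ioo a b) ≠ ⊤)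
    (hAC : AbsContOn (fun t => (eVariationOn γ (Set.Ioo a t)).toReal) a b) :
    volume ({t | ¬ WStarDiff γ t} ∩ Set.Ioo a' b') = 0 := by
  classical
  set F : ℝ → ℝ := fun t => (eVariationOn γ (Set.Ioo a t)).toReal with hFdef
  set c : ℝ → ℝ := fun t => max a' (min t b') with hcdef
  have hcmem : ∀ t, c t ∈ Set.Icc a' b' := fun t =>
    ⟨le_max_left _ _, max_le hab'.le (min_le_right t b')⟩
  have hcmono : Monotone c := fun x y hxy => max_le_max le_rfl (min_le_min hxy le_rfl)
  have hceq : ∀ t, t ∈ Set.Icc a' b' → c t = t := by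
    intro t ht
    rw [hcdef]
    simp only []
    rw [min_eq_left ht.2, max_eq_right ht.1]
  have hIccsub : ∀ p q : ℝ, a' ≤ p → q ≤ b' → Set.Icc p q ⊆ Set.Ioo a b := by
    intro p q hp hq x hx
    exact ⟨by linarith [hx.1], by linarith [hx.2]⟩
  have hfin' : ∀ p q : ℝ, a' ≤ p → q ≤ b' → eVariationOn γ (Set.Icc p q) ≠ ⊤ := by
    intro p q hp hq
    rcases le_or_gt p q with h | h
    · exact ne_top_of_le_ne_top hfin (eVariationOn.mono γ (hIccsub p q hp hq))
    · rw [Set.Icc_eq_empty (not_le.2 h)]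
      simp [eVariationOn.subsingleton γ Set.subsingleton_empty]
  set L : ℝ → ℝ := fun t => (eVariationOn γ (Set.Icc a' (c t))).toReal with hLdef
  have hvar_split : ∀ x y : ℝ, x ≤ y →
      eVariationOn γ (Set.Icc a' (c x)) + eVariationOn γ (Set.Icc (c x) (c y))
        = eVariationOn γ (Set.Icc a' (c y)) := by
    intro x y hxy
    have h := eVariationOn.Icc_add_Icc γ (s := (Set.univ : Set ℝ)) (hcmem x).1
      (hcmono hxy) (Set.mem_univ (c x))
    simpa [Set.univ_inter] using h
  have hL_diff : ∀ x y : ℝ, x ≤ y →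
      L y - L x = (eVariationOn γ (Set.Icc (c x) (c y))).toReal := by
    intro x y hxy
    have h1 := hvar_split x y hxy
    have f1 : eVariationOn γ (Set.Icc a' (c x)) ≠ ⊤ := hfin' _ _ le_rfl (hcmem x).2
    have f2 : eVariationOn γ (Set.Icc (c x) (c y)) ≠ ⊤ := hfin' _ _ (hcmem x).1 (hcmem y).2
    rw [hLdef]
    simp only []
    rw [← h1, ENNReal.toReal_add f1 f2]
    ring
  have hL_mono : Monotone L := by
    intro x y hxy
    have h := hL_diff x y hxy
    have h2 : (0:ℝ) ≤ L y - L x := h ▸ ENNReal.toReal_nonneg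
    linarith
  have hdist : ∀ x y : ℝ, x ≤ y → dist (γ (c y)) (γ (c x)) ≤ L y - L x := by
    intro x y hxy
    rw [hL_diff x y hxy, dist_edist]
    refine ENNReal.toReal_mono (hfin' _ _ (hcmem x).1 (hcmem y).2) ?_
    rw [edist_comm]
    exact eVariationOn.edist_le γ ⟨le_rfl, hcmono hxy⟩ ⟨hcmono hxy, le_rfl⟩
  have hclip : ∀ p q : ℝ, p ≤ q → c q - c p ≤ q - p := by
    intro p q hpq
    have hm : min q b' - min p b' ≤ q - p := by
      rcases le_total q b' with h | h <;> rcases le_total p b' with h' | h'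
      · rw [min_eq_left h, min_eq_left h']
      · rw [min_eq_left h, min_eq_right h']; linarith
      · rw [min_eq_right h, min_eq_left h']; linarith
      · rw [min_eq_right h, min_eq_right h']; linarith
    have hmono : min p b' ≤ min q b' := min_le_min hpq le_rfl
    have hM : max a' (min q b') - max a' (min p b') ≤ min q b' - min p b' := by
      rcases le_total a' (min p b') with h | h <;> rcases le_total a' (min q b') with h' | h'
      · rw [max_eq_right h, max_eq_right h']
      · rw [max_eq_right h, max_eq_left h']; linarith
      · rw [max_eq_left h, max_eq_right h']; linarith
      · rw [max_eq_left h, max_eq_left h']; linarith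
    rw [hcdef]
    simp only []
    linarith
  -- continuity of L
  have hLkey : ∀ ε > (0:ℝ), ∃ δ > (0:ℝ), ∀ p q : ℝ, p ≤ q → q - p < δ → L q - L p < ε := by
    intro ε hε
    obtain ⟨δ₀, hδ₀, hACδ⟩ := hAC ε hε
    set δ : ℝ := min (δ₀ / 2) ((b - b') / 2) with hδdef
    have hδpos : 0 < δ := lt_min (by linarith) (by linarith)
    refine ⟨δ, hδpos, fun p q hpq hqp => ?_⟩
    set p2 := c p with hp2
    set q2 := c q with hq2
    have hp2q2 : p2 ≤ q2 := hcmono hpq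
    have hq2b : q2 ≤ b' := (hcmem q).2
    have hp2a : a' ≤ p2 := (hcmem p).1
    set q' : ℝ := q2 + δ with hq'def
    have hq'b : q' < b := by
      have : δ ≤ (b - b') / 2 := min_le_right _ _
      rw [hq'def]; linarith
    have hp2mem : p2 ∈ Set.Ioo a b := ⟨by linarith, by linarith⟩
    have hq'mem : q' ∈ Set.Ioo a b := ⟨by linarith, hq'b⟩
    have hp2q' : p2 ≤ q' := by rw [hq'def]; linarith
    have hlen : q' - p2 < δ₀ := by
      have h1 : q2 - p2 ≤ q - p := hclip p q hpq
      have h2 : δ ≤ δ₀ / 2 := min_le_left _ _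
      rw [hq'def]; linarith
    have hstep : eVariationOn γ (Set.Ioo a p2) + eVariationOn γ (Set.Icc p2 q2)
        ≤ eVariationOn γ (Set.Ioo a q') := by
      refine le_trans (eVariationOn.add_le_union γ ?_) (eVariationOn.mono γ ?_)
      · intro x hx y hy
        exact le_of_lt (lt_of_lt_of_le hx.2 hy.1)
      · rintro x (hx | hx)
        · exact ⟨hx.1, by linarith [hx.2]⟩
        · exact ⟨by linarith [hx.1], by linarith [hx.2]⟩
    have hfinq' : eVariationOn γ (Set.Ioo a q') ≠ ⊤ := by
      refine ne_top_of_le_ne_top hfin (eVariationOn.mono γ ?_)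
      intro x hx
      exact ⟨hx.1, by linarith [hx.2]⟩
    have hfinp2 : eVariationOn γ (Set.Ioo a p2) ≠ ⊤ := by
      refine ne_top_of_le_ne_top hfin (eVariationOn.mono γ ?_)
      intro x hx
      exact ⟨hx.1, by linarith [hx.2]⟩
    have hfinmid : eVariationOn γ (Set.Icc p2 q2) ≠ ⊤ := hfin' _ _ hp2a hq2b
    have htr : F p2 + (eVariationOn γ (Set.Icc p2 q2)).toReal ≤ F q' := by
      have := ENNReal.toReal_mono hfinq' hstep
      rwa [ENNReal.toReal_add hfinp2 hfinmid] at this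
    have hACapp : |F q' - F p2| < ε := by
      have happ := hACδ 1 (fun _ => p2) (fun _ => q') (fun _ => hp2mem) (fun _ => hq'mem)
        (fun _ => hp2q') (Subsingleton.pairwise) (by simpa using hlen)
      simpa using happ
    have hLq : L q - L p = (eVariationOn γ (Set.Icc p2 q2)).toReal := hL_diff p q hpq
    have habs := abs_lt.1 hACapp
    linarith [habs.2]
  have hLcont : Continuous L := by
    rw [Metric.continuous_iff]
    intro x ε hε
    obtain ⟨δ, hδpos, hδ⟩ := hLkey ε hε
    refine ⟨δ, hδpos, fun y hy => ?_⟩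
    rw [Real.dist_eq] at hy ⊢
    rcases le_total x y with h | h
    · rw [abs_of_nonneg (by linarith [hL_mono h] : (0:ℝ) ≤ L y - L x)]
      exact hδ x y h (by rw [abs_of_nonneg (by linarith)] at hy; linarith)
    · rw [abs_of_nonpos (by linarith [hL_mono h] : L y - L x ≤ 0)]
      have := hδ y x h (by rw [abs_of_nonpos (by linarith)] at hy; linarith)
      linarith
  -- the reparametrisation
  set S : ℝ → ℝ := fun t => t + L t with hSdef
  have hScont : Continuous S := continuous_id.add hLcont
  have hSmono : StrictMono S := by
    intro x y hxy
    have := hL_mono hxy.le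
    simp only [hSdef]
    linarith
  have hLnonneg : ∀ t, 0 ≤ L t := fun t => ENNReal.toReal_nonneg
  have hLbdd : ∀ t, L t ≤ (eVariationOn γ (Set.Icc a' b')).toReal := by
    intro t
    exact ENNReal.toReal_mono (hfin' a' b' le_rfl le_rfl)
      (eVariationOn.mono γ (Set.Icc_subset_Icc le_rfl (hcmem t).2))
  have hSsurj : Function.Surjective S := by
    intro z
    set M0 : ℝ := (eVariationOn γ (Set.Icc a' b')).toReal with hM0
    have hM0nn : 0 ≤ M0 := ENNReal.toReal_nonneg
    have h1 : S (z - M0 - 1) ≤ z - 1 := by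
      simp only [hSdef]
      linarith [hLbdd (z - M0 - 1)]
    have h2 : z ≤ S (z + 1) := by
      simp only [hSdef]
      linarith [hLnonneg (z + 1)]
    have hle : z - M0 - 1 ≤ z + 1 := by linarith
    have hz : z ∈ Set.Icc (S (z - M0 - 1)) (S (z + 1)) := ⟨by linarith, h2⟩
    obtain ⟨t, _, ht⟩ := intermediate_value_Icc hle hScont.continuousOn hz
    exact ⟨t, ht⟩
  set T : ℝ → ℝ := fun s => (hSsurj s).choose with hTdef
  have hST : ∀ s, S (T s) = s := fun s => (hSsurj s).choose_spec
  have hTS : ∀ t, T (S t) = t := fun t => hSmono.injective (hST (S t))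
  have hTmono : Monotone T := by
    intro s s' hss
    by_contra hcon
    push_neg at hcon
    have h2 := hSmono hcon
    rw [hST, hST] at h2
    exact absurd hss (not_le.2 h2)
  have hLeq : ∀ s, L (T s) = s - T s := by
    intro s
    have := hST s
    simp only [hSdef] at this
    linarith
  have hTkey : ∀ u w : ℝ, u ≤ w → T w - T u ≤ w - u := by
    intro u w huw
    have h2 : T u ≤ T w := hTmono huw
    have h3 := hL_mono h2
    have h4 := hLeq u
    have h5 := hLeq w
    linarith
  have hT_lip : LipschitzWith 1 T := by
    refine LipschitzWith.of_dist_le_mul fun s s' => ?_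
    rw [NNReal.coe_one, one_mul, Real.dist_eq, Real.dist_eq]
    rcases le_total s s' with h | h
    · have h2 := hTmono h
      rw [abs_of_nonpos (by linarith), abs_of_nonpos (by linarith)]
      have := hTkey s s' h
      linarith
    · have h2 := hTmono h
      rw [abs_of_nonneg (by linarith), abs_of_nonneg (by linarith)]
      have := hTkey s' s h
      linarith
  set γh : ℝ → StrongDual ℝ V := fun s => γ (c (T s)) with hγhdef
  have hγh_lip : LipschitzWith 1 γh := by
    refine LipschitzWith.of_dist_le_mul fun s s' => ?_
    rw [NNReal.coe_one, one_mul, Real.dist_eq]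
    have hkey : ∀ u w : ℝ, u ≤ w → dist (γh w) (γh u) ≤ w - u := by
      intro u w huw
      have h2 : T u ≤ T w := hTmono huw
      have h3 := hdist (T u) (T w) h2
      have h4 := hLeq u
      have h5 := hLeq w
      have h6 := hTkey u w huw
      calc dist (γh w) (γh u) ≤ L (T w) - L (T u) := h3
        _ ≤ w - u := by linarith [hTmono huw]
    rcases le_total s s' with h | h
    · have := hkey s s' h
      rw [dist_comm] at this
      rw [abs_of_nonpos (by linarith)]
      linarith
    · have := hkey s' s h
      rw [abs_of_nonneg (by linarith)]
      linarith
  -- a.e. weak* differentiability of the reparametrised curve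
  have hNae := lipschitz_ae_wstar_diff hWS hγh_lip
  have hN : volume {σ : ℝ | ¬ WStarDiff γh σ} = 0 := by
    rw [MeasureTheory.ae_iff] at hNae
    exact hNae
  have hpull : volume {t : ℝ | ¬ WStarDiff γh (S t)} = 0 := by
    refine measure_mono_null ?_ (lipschitz_image_null hT_lip hN)
    intro t ht
    exact ⟨S t, ht, hTS t⟩
  have hSae : ∀ᵐ t ∂(volume : Measure ℝ), WStarDiff γh (S t) := by
    rw [MeasureTheory.ae_iff]
    exact hpull
  have hgood : ∀ᵐ t ∂(volume : Measure ℝ),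
      DifferentiableAt ℝ L t ∧ WStarDiff γh (S t) :=
    (hL_mono.ae_differentiableAt).and hSae
  rw [MeasureTheory.ae_iff] at hgood
  refine measure_mono_null ?_ hgood
  rintro t ⟨hbad, htmem⟩
  simp only [Set.mem_setOf_eq]
  rintro ⟨hdL, hγhS⟩
  refine hbad ?_
  -- chain rule
  obtain ⟨Λh, hΛh⟩ := hγhS
  set lam : ℝ := 1 + deriv L t with hlam
  have hS' : HasDerivAt S lam t := (hasDerivAt_id t).add hdL.hasDerivAt
  have hmapt : Filter.Tendsto (fun h : ℝ => t + h) (𝓝[≠] (0:ℝ)) (𝓝[≠] t) := by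
    refine tendsto_nhdsWithin_of_tendsto_nhds_of_eventually_within _ ?_ ?_
    · have hcont : Continuous fun h : ℝ => t + h := continuous_const.add continuous_id
      have h2 : Filter.Tendsto (fun h : ℝ => t + h) (𝓝 (0:ℝ)) (𝓝 t) := by
        simpa using hcont.tendsto (0:ℝ)
      exact h2.mono_left nhdsWithin_le_nhds
    · filter_upwards [self_mem_nhdsWithin] with h hh
      simp only [Set.mem_compl_iff, Set.mem_singleton_iff] at hh ⊢
      intro hcon
      exact hh (by linarith)
  have hk : Filter.Tendsto (fun h : ℝ => (S (t + h) - S t) / h) (𝓝[≠] (0:ℝ)) (𝓝 lam) := by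
    rw [hasDerivAt_iff_tendsto_slope] at hS'
    refine (hS'.comp hmapt).congr fun h => ?_
    simp [slope_def_field]
  have hk0 : Filter.Tendsto (fun h : ℝ => S (t + h) - S t) (𝓝[≠] (0:ℝ)) (𝓝[≠] (0:ℝ)) := by
    refine tendsto_nhdsWithin_of_tendsto_nhds_of_eventually_within _ ?_ ?_
    · have hc : Continuous fun h : ℝ => S (t + h) - S t :=
        (hScont.comp (continuous_const.add continuous_id)).sub continuous_const
      have h2 : Filter.Tendsto (fun h : ℝ => S (t + h) - S t) (𝓝 (0:ℝ)) (𝓝 0) := by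
        have := hc.tendsto (0:ℝ)
        simpa using this
      exact h2.mono_left nhdsWithin_le_nhds
    · filter_upwards [self_mem_nhdsWithin] with h hh
      simp only [Set.mem_compl_iff, Set.mem_singleton_iff] at hh ⊢
      refine sub_ne_zero.2 fun hcon => ?_
      have := hSmono.injective hcon
      exact hh (by linarith)
  refine ⟨lam • Λh, fun v => ?_⟩
  have hF := hΛh v
  have hprod := (hF.comp hk0).mul hk
  have hδmem : (0:ℝ) < min (t - a') (b' - t) := lt_min (by linarith [htmem.1]) (by linarith [htmem.2])
  have hev : ∀ᶠ h in 𝓝[≠] (0:ℝ),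
      ((fun k : ℝ => (γh (S t + k) v - γh (S t) v) / k) ∘ fun h : ℝ => S (t + h) - S t) h
          * ((S (t + h) - S t) / h)
        = (γ (t + h) v - γ t v) / h := by
    have hball : ∀ᶠ h in 𝓝 (0:ℝ), |h| < min (t - a') (b' - t) := by
      filter_upwards [Metric.ball_mem_nhds (0:ℝ) hδmem] with h hh
      simpa [Real.dist_eq] using hh
    filter_upwards [hball.filter_mono nhdsWithin_le_nhds, self_mem_nhdsWithin] with h hh hh0
    have hh0' : h ≠ 0 := hh0
    have habs := abs_lt.1 hh
    have hlt := lt_min_iff.1 hh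
    have htmem' : t + h ∈ Set.Icc a' b' := by
      constructor
      · have := abs_lt.1 (lt_of_lt_of_le hh (min_le_left _ _))
        linarith [this.1]
      · have := abs_lt.1 (lt_of_lt_of_le hh (min_le_right _ _))
        linarith [this.2]
    have hknz : S (t + h) - S t ≠ 0 := by
      refine sub_ne_zero.2 fun hcon => ?_
      have := hSmono.injective hcon
      exact hh0' (by linarith)
    have he1 : S t + (S (t + h) - S t) = S (t + h) := by ring
    have he2 : γh (S (t + h)) = γ (t + h) := by
      rw [hγhdef]
      simp only []
      rw [hTS, hceq _ htmem']
    have he3 : γh (S t) = γ t := by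
      rw [hγhdef]
      simp only []
      rw [hTS, hceq _ ⟨htmem.1.le, htmem.2.le⟩]
    simp only [Function.comp_apply]
    rw [he1, he2, he3]
    rw [div_mul_div_comm, mul_comm (S (t + h) - S t) h, ← div_mul_div_comm,
      div_self hknz, mul_one]
  have hfinal := hprod.congr' hev
  have hval : Λh v * lam = (lam • Λh) v := by
    rw [ContinuousLinearMap.smul_apply, smul_eq_mul, mul_comm]
  rw [hval] at hfinal
  exact hfinal

lemma forward (hWS : HasWeakStarLebesgueDensityProperty V) {a b : ℝ} (hab : a < b)
    (γ : ℝ → StrongDual ℝ V)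
    (hfin : eVariationOn γ (Set.Ioo a b) ≠ ⊤)
    (hAC : AbsContOn (fun t => (eVariationOn γ (Set.Ioo a t)).toReal) a b) :
    ∀ᵐ t ∂(volume.restrict (Set.Ioo a b)), WStarDiff γ t := by
  rw [MeasureTheory.ae_iff, Measure.restrict_apply' measurableSet_Ioo]
  have hba : (0:ℝ) < b - a := by linarith
  have hsub : {t | ¬ WStarDiff γ t} ∩ Set.Ioo a b ⊆
      ⋃ n : ℕ, ({t | ¬ WStarDiff γ t} ∩
        Set.Ioo (a + (b - a)/((n:ℝ) + 3)) (b - (b - a)/((n:ℝ) + 3))) := by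
    rintro t ⟨ht, htm⟩
    set m : ℝ := min (t - a) (b - t) with hm
    have hmpos : 0 < m := lt_min (by linarith [htm.1]) (by linarith [htm.2])
    obtain ⟨n, hn⟩ := exists_nat_gt ((b - a)/m)
    refine Set.mem_iUnion.2 ⟨n, ht, ?_, ?_⟩
    · have hngt : (b - a)/((n:ℝ) + 3) < m := by
        rw [div_lt_iff₀ (by positivity : (0:ℝ) < (n:ℝ) + 3)]
        rw [div_lt_iff₀ hmpos] at hn
        nlinarith [hmpos]
      have := min_le_left (t - a) (b - t)
      linarith
    · have hngt : (b - a)/((n:ℝ) + 3) < m := by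
        rw [div_lt_iff₀ (by positivity : (0:ℝ) < (n:ℝ) + 3)]
        rw [div_lt_iff₀ hmpos] at hn
        nlinarith [hmpos]
      have := min_le_right (t - a) (b - t)
      linarith
  refine measure_mono_null hsub (measure_iUnion_null fun n => ?_)
  have h3 : (0:ℝ) < (n:ℝ) + 3 := by positivity
  have hq : (0:ℝ) < (b - a)/((n:ℝ) + 3) := by positivity
  have hqle : (b - a)/((n:ℝ) + 3) ≤ (b - a)/3 := by
    refine div_le_div_of_nonneg_left hba.le (by norm_num) ?_
    have : (0:ℝ) ≤ (n:ℝ) := Nat.cast_nonneg n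
    linarith
  refine forward_interval hWS (by linarith) (by linarith) (by linarith) hfin hAC

lemma backward
    (hdiff : ∀ γ : ℝ → StrongDual ℝ V,
      eVariationOn γ (Set.Ioo (0:ℝ) 1) ≠ ⊤ →
      AbsContOn (fun t => (eVariationOn γ (Set.Ioo (0:ℝ) t)).toReal) 0 1 →
      ∀ᵐ t ∂(volume.restrict (Set.Ioo (0:ℝ) 1)), WStarDiff γ t) :
    HasWeakStarLebesgueDensityProperty V := by
  classical
  intro f hmeas hbd
  obtain ⟨M₀, hM₀⟩ := hbd
  set M : ℝ := max M₀ 0 with hMdef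
  have hM : 0 ≤ M := le_max_right _ _
  have hMae : ∀ᵐ t ∂(volume.restrict (Set.Ioo (0:ℝ) 1)), ‖f t‖ ≤ M :=
    hM₀.mono fun t h => h.trans (le_max_left _ _)
  set w : V → ℝ → ℝ := fun v => (Set.Ioo (0:ℝ) 1).indicator (fun s => f s v) with hwdef
  have hw_meas : ∀ v, AEStronglyMeasurable (w v) volume := fun v =>
    ((aemeasurable_indicator_iff measurableSet_Ioo).2 (hmeas v)).aestronglyMeasurable
  have hw_bd : ∀ v, ∀ᵐ s ∂(volume : Measure ℝ), |w v s| ≤ M * ‖v‖ := by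
    intro v
    filter_upwards [(ae_restrict_iff' measurableSet_Ioo).1 hMae] with s hs
    by_cases hsm : s ∈ Set.Ioo (0:ℝ) 1
    · rw [hwdef]
      simp only []
      rw [Set.indicator_of_mem hsm]
      calc |f s v| ≤ ‖f s‖ * ‖v‖ := by
            simpa [Real.norm_eq_abs] using (f s).le_opNorm v
        _ ≤ M * ‖v‖ := mul_le_mul_of_nonneg_right (hs hsm) (norm_nonneg v)
    · rw [hwdef]
      simp only []
      rw [Set.indicator_of_notMem hsm]
      simp
      positivity
  have hw_int : ∀ v, Integrable (w v) volume := by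
    intro v
    refine Integrable.mono' (g := (Set.Ioo (0:ℝ) 1).indicator fun _ => M * ‖v‖ + 1) ?_
      (hw_meas v) ?_
    · rw [integrable_indicator_iff measurableSet_Ioo]
      exact integrableOn_const (by rw [Real.volume_Ioo]; exact ofReal_ne_top)
    · filter_upwards [hw_bd v] with s hs
      by_cases hsm : s ∈ Set.Ioo (0:ℝ) 1
      · rw [Set.indicator_of_mem hsm]
        rw [Real.norm_eq_abs]
        linarith
      · have : w v s = 0 := by
          rw [hwdef]; simp only []; rw [Set.indicator_of_notMem hsm]
        rw [Set.indicator_of_notMem hsm, this]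
        simp
  have hw_ii : ∀ v (p q : ℝ), IntervalIntegrable (w v) volume p q := fun v p q =>
    (hw_int v).intervalIntegrable
  have hw_add : ∀ (v v' : V) (s : ℝ), w (v + v') s = w v s + w v' s := by
    intro v v' s
    rw [hwdef]
    simp only []
    by_cases hsm : s ∈ Set.Ioo (0:ℝ) 1
    · rw [Set.indicator_of_mem hsm, Set.indicator_of_mem hsm, Set.indicator_of_mem hsm]
      exact map_add (f s) v v'
    · rw [Set.indicator_of_notMem hsm, Set.indicator_of_notMem hsm,
        Set.indicator_of_notMem hsm]
      ring
  have hw_smul : ∀ (c : ℝ) (v : V) (s : ℝ), w (c • v) s = c * w v s := by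
    intro c v s
    rw [hwdef]
    simp only []
    by_cases hsm : s ∈ Set.Ioo (0:ℝ) 1
    · rw [Set.indicator_of_mem hsm, Set.indicator_of_mem hsm]
      rw [_root_.map_smul, smul_eq_mul]
    · rw [Set.indicator_of_notMem hsm, Set.indicator_of_notMem hsm]
      ring
  set gam : ℝ → StrongDual ℝ V := fun t => LinearMap.mkContinuous
    { toFun := fun v => ∫ s in (0:ℝ)..t, w v s
      map_add' := by
        intro v v'
        have heq : (∫ s in (0:ℝ)..t, w (v + v') s)
            = ∫ s in (0:ℝ)..t, (w v s + w v' s) :=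
          intervalIntegral.integral_congr fun s _ => hw_add v v' s
        rw [heq]
        exact intervalIntegral.integral_add (hw_ii v 0 t) (hw_ii v' 0 t)
      map_smul' := by
        intro c v
        simp only [RingHom.id_apply, smul_eq_mul]
        have heq : (∫ s in (0:ℝ)..t, w (c • v) s)
            = ∫ s in (0:ℝ)..t, c * w v s :=
          intervalIntegral.integral_congr fun s _ => hw_smul c v s
        rw [heq]
        exact intervalIntegral.integral_const_mul c (w v) }
    (M * (|t| + 1))
    (fun v => by
      have h1 : ‖∫ s in (0:ℝ)..t, w v s‖ ≤ (M * ‖v‖) * |t - 0| := by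
        refine intervalIntegral.norm_integral_le_of_norm_le_const_ae ?_
        filter_upwards [hw_bd v] with s hs _
        simpa [Real.norm_eq_abs] using hs
      refine h1.trans ?_
      rw [sub_zero]
      have := norm_nonneg v
      have := abs_nonneg t
      nlinarith) with hgamdef
  have hgam_apply : ∀ (t : ℝ) (v : V), gam t v = ∫ s in (0:ℝ)..t, w v s := fun t v => rfl
  have hdiffint : ∀ (v : V) (p q : ℝ), gam q v - gam p v = ∫ s in p..q, w v s := by
    intro v p q
    rw [hgam_apply, hgam_apply]
    exact intervalIntegral.integral_interval_sub_left (hw_ii v 0 q) (hw_ii v 0 p)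
  have hgam_lip : LipschitzWith M.toNNReal gam := by
    refine LipschitzWith.of_dist_le_mul fun p q => ?_
    rw [dist_eq_norm, Real.coe_toNNReal _ hM, Real.dist_eq]
    refine ContinuousLinearMap.opNorm_le_bound _ (by positivity) fun v => ?_
    have h1 : (gam p - gam q) v = gam p v - gam q v := ContinuousLinearMap.sub_apply _ _ _
    rw [h1]
    have h2 : gam p v - gam q v = ∫ s in q..p, w v s := hdiffint v q p
    rw [h2]
    have h3 : ‖∫ s in q..p, w v s‖ ≤ (M * ‖v‖) * |p - q| := by
      refine intervalIntegral.norm_integral_le_of_norm_le_const_ae ?_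
      filter_upwards [hw_bd v] with s hs _
      simpa [Real.norm_eq_abs] using hs
    refine h3.trans (le_of_eq ?_)
    ring
  -- the curve is absolutely continuous on (0,1)
  have hfinIcc : eVariationOn gam (Set.Icc (0:ℝ) 1) ≤ ENNReal.ofReal ((M.toNNReal : ℝ) * (1 - 0)) :=
    eVariationOn_Icc_le gam hgam_lip (by norm_num)
  have hfin : eVariationOn gam (Set.Ioo (0:ℝ) 1) ≠ ⊤ := by
    refine ne_top_of_le_ne_top ?_ ((eVariationOn.mono gam Set.Ioo_subset_Icc_self).trans hfinIcc)
    exact ofReal_ne_top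
  set FG : ℝ → ℝ := fun t => (eVariationOn gam (Set.Ioo (0:ℝ) t)).toReal with hFGdef
  have hfinr : ∀ r : ℝ, r ≤ 1 → eVariationOn gam (Set.Ioo (0:ℝ) r) ≠ ⊤ := by
    intro r hr
    refine ne_top_of_le_ne_top (ne_top_of_le_ne_top ofReal_ne_top
      ((eVariationOn.mono gam Set.Ioo_subset_Icc_self).trans hfinIcc))
      (eVariationOn.mono gam ?_)
    intro x hx
    exact ⟨hx.1, by linarith [hx.2]⟩
  have hFG_lip : ∀ p q : ℝ, p ∈ Set.Ioo (0:ℝ) 1 → q ∈ Set.Ioo (0:ℝ) 1 → p ≤ q →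
      FG q - FG p ≤ M * (q - p) := by
    intro p q hp hq hpq
    have hV := eVariationOn_Ioo_le_add gam hgam_lip (a := 0) hp.1 hpq
    have h2 := ENNReal.toReal_mono
      (by
        refine ENNReal.add_ne_top.2 ⟨hfinr p hp.2.le, ofReal_ne_top⟩) hV
    rw [ENNReal.toReal_add (hfinr p hp.2.le) ofReal_ne_top,
      ENNReal.toReal_ofReal (mul_nonneg (by positivity) (by linarith) : (0:ℝ) ≤ (M.toNNReal : ℝ) * (q - p))] at h2
    rw [Real.coe_toNNReal _ hM] at h2
    have := h2
    rw [hFGdef]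
    simp only []
    linarith
  have hFG_mono : ∀ p q : ℝ, q ≤ 1 → p ≤ q → FG p ≤ FG q := by
    intro p q hq hpq
    exact ENNReal.toReal_mono (hfinr q hq)
      (eVariationOn.mono gam (fun x hx => ⟨hx.1, lt_of_lt_of_le hx.2 hpq⟩))
  have hAC : AbsContOn FG 0 1 := by
    intro ε hε
    refine ⟨ε / (M + 1), by positivity, fun k s t hs ht hst _ hsum => ?_⟩
    have hterm : ∀ i, |FG (t i) - FG (s i)| ≤ M * (t i - s i) := by
      intro i
      rw [abs_of_nonneg (by linarith [hFG_mono (s i) (t i) (ht i).2.le (hst i)])]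
      exact hFG_lip (s i) (t i) (hs i) (ht i) (hst i)
    calc (∑ i, |FG (t i) - FG (s i)|) ≤ ∑ i, M * (t i - s i) :=
          Finset.sum_le_sum fun i _ => hterm i
      _ = M * ∑ i, (t i - s i) := by rw [Finset.mul_sum]
      _ ≤ (M + 1) * ∑ i, (t i - s i) := by
          refine mul_le_mul_of_nonneg_right (by linarith) ?_
          exact Finset.sum_nonneg fun i _ => by linarith [hst i]
      _ < (M + 1) * (ε / (M + 1)) := by
          refine mul_lt_mul_of_pos_left hsum (by linarith)
      _ = ε := by field_simp
  have hae := hdiff gam hfin hAC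
  -- define the representative
  set g : ℝ → StrongDual ℝ V := fun t =>
    if h : WStarDiff gam t then h.choose else 0 with hgdef
  have hg_spec : ∀ t, WStarDiff gam t → ∀ v : V,
      Filter.Tendsto (fun h : ℝ => (gam (t + h) v - gam t v) / h) (𝓝[≠] (0:ℝ))
        (𝓝 (g t v)) := by
    intro t ht v
    have : g t = ht.choose := by rw [hgdef]; exact dif_pos ht
    rw [this]
    exact ht.choose_spec v
  have hrep : ∀ v : V, ∀ᵐ t ∂(volume.restrict (Set.Ioo (0:ℝ) 1)), f t v = g t v := by
    intro v
    filter_upwards [hae, ae_restrict_of_ae (ae_tendsto_interval_average (hw_int v)),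
      ae_restrict_mem measurableSet_Ioo] with t ht hB htm
    have h1 := hg_spec t ht v
    have h2 : (fun h : ℝ => (gam (t + h) v - gam t v) / h)
        = fun h : ℝ => (∫ s in t..(t + h), w v s) / h := by
      funext h
      rw [hdiffint v t (t + h)]
    rw [h2] at h1
    have h3 : g t v = w v t := tendsto_nhds_unique h1 hB
    have h4 : w v t = f t v := by
      rw [hwdef]; simp only []; rw [Set.indicator_of_mem htm]
    rw [← h4, h3]
  refine ⟨g, hrep, ?_⟩
  filter_upwards [hae, ae_restrict_mem measurableSet_Ioo] with t ht htm
  intro v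
  have hgv : ∀ᵐ s ∂(volume : Measure ℝ), s ∈ Set.Ioo (0:ℝ) 1 → g s v = w v s := by
    filter_upwards [(ae_restrict_iff' measurableSet_Ioo).1 (hrep v)] with s hs hmem
    have h4 : w v s = f s v := by
      rw [hwdef]; simp only []; rw [Set.indicator_of_mem hmem]
    rw [h4]
    exact (hs hmem).symm
  have hδ : (0:ℝ) < min t (1 - t) := lt_min htm.1 (by linarith [htm.2])
  have hev : ∀ᶠ h in 𝓝[≠] (0:ℝ),
      (gam (t + h) v - gam t v) / h = (∫ s in t..(t + h), g s v) / h := by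
    have hball : ∀ᶠ h in 𝓝 (0:ℝ), |h| < min t (1 - t) := by
      filter_upwards [Metric.ball_mem_nhds (0:ℝ) hδ] with h hh
      simpa [Real.dist_eq] using hh
    filter_upwards [hball.filter_mono nhdsWithin_le_nhds] with h hh
    have hsub : Set.uIoc t (t + h) ⊆ Set.Ioo (0:ℝ) 1 := by
      refine (uIoc_subset_closedBall t h).trans ?_
      intro y hy
      rw [Metric.mem_closedBall, Real.dist_eq] at hy
      have h1 := abs_le.1 hy
      have h2 := lt_min_iff.1 hh
      constructor
      · linarith [h1.1, h2.1]
      · linarith [h1.2, h2.2]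
    have hcongr : (∫ s in t..(t + h), g s v) = ∫ s in t..(t + h), w v s := by
      refine intervalIntegral.integral_congr_ae ?_
      filter_upwards [hgv] with s hs hmem
      exact hs (hsub hmem)
    rw [hcongr, hdiffint v t (t + h)]
  exact (hg_spec t ht v).congr' hev

end Core

end WSLDP

/-- **Theorem.** The following are equivalent: (i) `V*` has the weak* Lebesgue density
property; (ii) every absolutely continuous curve `γ : (a,b) → V*` is weak*
differentiable at almost every `t ∈ (a,b)`. -/
theorem hasWeakStarLDP_iff_ae_weakStar_differentiable
    {V : Type*} [NormedAddCommGroup V] [NormedSpace ℝ V] [CompleteSpace V] :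
    HasWeakStarLebesgueDensityProperty V ↔
      ∀ (a b : ℝ), a < b → ∀ γ : ℝ → StrongDual ℝ V, IsAbsContCurve γ a b →
        ∀ᵐ t ∂(volume.restrict (Set.Ioo a b)),
          ∃ Λ : StrongDual ℝ V, ∀ v : V,
            Filter.Tendsto (fun h : ℝ => (γ (t + h) v - γ t v) / h)
              (nhdsWithin 0 {0}ᶜ) (nhds (Λ v)) := by
  constructor
  · intro hWS a b hab γ hγ
    exact WSLDP.forward hWS hab γ hγ.1 hγ.2
  · intro hdiff
    refine WSLDP.backward ?_
    intro γ hfin hAC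
    exact hdiff 0 1 one_pos γ ⟨hfin, hAC⟩
end
end
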